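/- arXiv:1605.08965 — 10 statements merged into one kernel-verified Lean document; each statement's English description precedes it below -/
import Mathlib

section
/- Let α ∈ ℝ, S ∈ (0,∞], and let φ₁ : [0,S) → ℝ be continuous with φ₁(t) > 0 for all t. Define τ(s) = ∫₀ˢ e^{−αz}/φ₁(z)² dz. Then for every t ∈ [0,S): ∫₀ᵗ e^{αs} τ(s) φ₁(s) ds − τ(t)·∫₀ᵗ e^{αs} φ₁(s) ds = −∫₀ᵗ ( ∫ₛᵗ (φ₁(s)/φ₁(z)²)·e^{α(s−z)} dz ) ds. In particular this quantity is ≤ 0 for every t ∈ [0,S). -/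
/-- The coefficient function
`σ(t) = ∫₀ᵗ e^{αs} τ(s) φ₁(s) ds − τ(t) ∫₀ᵗ e^{αs} φ₁(s) ds`, with
`τ(s) = ∫₀ˢ e^{−αz}/φ₁(z)² dz`, equals
`−∫₀ᵗ ∫ₛᵗ (φ₁(s)/φ₁(z)²) e^{α(s−z)} dz ds`, and is therefore nonpositive.
The interval `[0, S)`, `S ∈ (0, ∞]`, is encoded via `S : EReal`, `0 < S`. -/
theorem sigma_double_integral_nonpositive
    (α : ℝ) (S : EReal) (hS : 0 < S) (φ₁ : ℝ → ℝ)
    (hcont : ContinuousOn φ₁ {t : ℝ | 0 ≤ t ∧ (t : EReal) < S})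
    (hpos : ∀ t : ℝ, 0 ≤ t → (t : EReal) < S → 0 < φ₁ t)
    (τ : ℝ → ℝ)
    (hτ : ∀ s : ℝ, τ s = ∫ z in (0:ℝ)..s, Real.exp (-α * z) / (φ₁ z) ^ 2) :
    ∀ t : ℝ, 0 ≤ t → (t : EReal) < S →
      ((∫ s in (0:ℝ)..t, Real.exp (α * s) * τ s * φ₁ s) -
          τ t * ∫ s in (0:ℝ)..t, Real.exp (α * s) * φ₁ s)
        = -∫ s in (0:ℝ)..t, ∫ z in s..t, (φ₁ s / (φ₁ z) ^ 2) * Real.exp (α * (s - z)) ∧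
      ((∫ s in (0:ℝ)..t, Real.exp (α * s) * τ s * φ₁ s) -
          τ t * ∫ s in (0:ℝ)..t, Real.exp (α * s) * φ₁ s) ≤ 0 := by
  intro t ht0 htS
  set g : ℝ → ℝ := fun z => Real.exp (-α * z) / (φ₁ z) ^ 2 with hg
  have hsub : Set.Icc (0:ℝ) t ⊆ {s : ℝ | 0 ≤ s ∧ (s : EReal) < S} := by
    intro x hx
    exact ⟨hx.1, lt_of_le_of_lt (EReal.coe_le_coe_iff.mpr hx.2) htS⟩
  have hφcont : ContinuousOn φ₁ (Set.Icc 0 t) := hcont.mono hsub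
  have hφpos : ∀ x ∈ Set.Icc (0:ℝ) t, 0 < φ₁ x := fun x hx =>
    hpos x (hsub hx).1 (hsub hx).2
  have hgcont : ContinuousOn g (Set.Icc 0 t) := by
    apply ContinuousOn.div
    · exact (Real.continuous_exp.comp (continuous_const.mul continuous_id)).continuousOn
    · exact hφcont.pow 2
    · intro x hx
      exact pow_ne_zero 2 (hφpos x hx).ne'
  have huIcc : Set.uIcc (0:ℝ) t = Set.Icc 0 t := Set.uIcc_of_le ht0
  have hgint : IntervalIntegrable g MeasureTheory.volume 0 t :=
    hgcont.intervalIntegrable_of_Icc ht0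
  have hτcont : ContinuousOn τ (Set.Icc 0 t) := by
    have h := intervalIntegral.continuousOn_primitive_interval' hgint
      (Set.left_mem_uIcc (a := (0:ℝ)) (b := t))
    rw [huIcc] at h
    exact h.congr fun s _ => hτ s
  -- pointwise identity on Icc 0 t
  have hpt : ∀ s ∈ Set.Icc (0:ℝ) t,
      Real.exp (α * s) * τ s * φ₁ s - τ t * (Real.exp (α * s) * φ₁ s)
        = -∫ z in s..t, (φ₁ s / (φ₁ z) ^ 2) * Real.exp (α * (s - z)) := by
    intro s hs
    have h1 : IntervalIntegrable g MeasureTheory.volume 0 s :=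
      hgint.mono_set (by rw [Set.uIcc_of_le hs.1, huIcc]; exact Set.Icc_subset_Icc_right hs.2)
    have h2 : IntervalIntegrable g MeasureTheory.volume s t :=
      hgint.mono_set (by rw [Set.uIcc_of_le hs.2, huIcc]; exact Set.Icc_subset_Icc_left hs.1)
    have hadd : τ s + (∫ z in s..t, g z) = τ t := by
      rw [hτ s, hτ t]
      exact intervalIntegral.integral_add_adjacent_intervals h1 h2
    have hτdiff : τ s - τ t = -∫ z in s..t, g z := by linarith
    have : Real.exp (α * s) * τ s * φ₁ s - τ t * (Real.exp (α * s) * φ₁ s)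
        = Real.exp (α * s) * φ₁ s * (τ s - τ t) := by ring
    rw [this, hτdiff, mul_neg, ← intervalIntegral.integral_const_mul]
    congr 1
    apply intervalIntegral.integral_congr
    intro z _
    simp only [hg]
    rw [show α * (s - z) = α * s + -α * z by ring, Real.exp_add]
    ring
  have hA : IntervalIntegrable (fun s => Real.exp (α * s) * τ s * φ₁ s)
      MeasureTheory.volume 0 t := by
    apply ContinuousOn.intervalIntegrable_of_Icc ht0
    exact (((Real.continuous_exp.comp (continuous_const.mul continuous_id)).continuousOn.mul
      hτcont).mul hφcont)
  have hB : IntervalIntegrable (fun s => τ t * (Real.exp (α * s) * φ₁ s))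
      MeasureTheory.volume 0 t := by
    apply ContinuousOn.intervalIntegrable_of_Icc ht0
    exact continuousOn_const.mul
      ((Real.continuous_exp.comp (continuous_const.mul continuous_id)).continuousOn.mul hφcont)
  have key : ((∫ s in (0:ℝ)..t, Real.exp (α * s) * τ s * φ₁ s) -
          τ t * ∫ s in (0:ℝ)..t, Real.exp (α * s) * φ₁ s)
        = -∫ s in (0:ℝ)..t, ∫ z in s..t, (φ₁ s / (φ₁ z) ^ 2) * Real.exp (α * (s - z)) := by
    rw [← intervalIntegral.integral_const_mul, ← intervalIntegral.integral_sub hA hB,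
      ← intervalIntegral.integral_neg]
    apply intervalIntegral.integral_congr
    intro s hs
    rw [huIcc] at hs
    exact hpt s hs
  refine ⟨key, ?_⟩
  rw [key, neg_nonpos]
  apply intervalIntegral.integral_nonneg ht0
  intro s hs
  apply intervalIntegral.integral_nonneg hs.2
  intro z hz
  have hspos : 0 < φ₁ s := hφpos s hs
  exact mul_nonneg (div_nonneg hspos.le (sq_nonneg _)) (Real.exp_pos _).le
end

section
/- Let Q = [0,1]² ⊂ ℝ², let α > 0, and let γ₀, ρ₀ : Q → ℝ be continuous with ρ₀(a) ≥ 0 for all a ∈ Q. Let m₀ := min_{a ∈ Q} γ₀(a) < 0 and τ* := −1/m₀. Let T ∈ (0,∞] and let φ₁, σ, τ_α : [0,T) → ℝ be continuous functions satisfying, for all t ∈ [0,T): τ_α(t) = ∫₀ᵗ e^{−αs}/φ₁(s)² ds; σ(t) = −∫₀ᵗ ( ∫ₛᵗ (φ₁(s)/φ₁(z)²)·e^{α(s−z)} dz ) ds; φ₁(t) = ∫_Q da/(1 + γ₀(a)·τ_α(t) − ρ₀(a)·σ(t)); and 0 ≤ τ_α(t) < τ*. Then φ₁(t) > 0 for all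 t ∈ [0,T). -/
open MeasureTheory Set


/-- Lemma 4.1 of Chen–Sarria. For nonnegative initial
temperature `ρ₀` and as long as `0 ≤ τ_α(t) < τ* = −1/m₀`, the function
`φ₁(t) = ∫_Q da/(1 + γ₀(a) τ_α(t) − ρ₀(a) σ(t))` stays strictly positive.
Here `Q = [0,1]² ⊂ ℝ²` (as `EuclideanSpace ℝ (Fin 2)`), integrals are with
respect to 2-dimensional Lebesgue measure, and the interval `[0, T)` with
`T ∈ (0, ∞]` is encoded via `T : EReal`, `0 < T`. -/
theorem phi_positive_damped_boussinesq
    (α : ℝ) (hα : 0 < α)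
    (Q : Set (EuclideanSpace ℝ (Fin 2)))
    (hQ : Q = {a : EuclideanSpace ℝ (Fin 2) | ∀ i, a i ∈ Set.Icc (0:ℝ) 1})
    (γ₀ ρ₀ : EuclideanSpace ℝ (Fin 2) → ℝ)
    (hγcont : ContinuousOn γ₀ Q) (hρcont : ContinuousOn ρ₀ Q)
    (hρnonneg : ∀ a ∈ Q, 0 ≤ ρ₀ a)
    (m₀ : ℝ) (hm₀attained : ∃ a ∈ Q, γ₀ a = m₀)
    (hm₀min : ∀ a ∈ Q, m₀ ≤ γ₀ a) (hm₀neg : m₀ < 0)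
    (T : EReal) (hT : 0 < T)
    (φ₁ σ τα : ℝ → ℝ)
    (hφcont : ContinuousOn φ₁ {t : ℝ | 0 ≤ t ∧ (t : EReal) < T})
    (hσcont : ContinuousOn σ {t : ℝ | 0 ≤ t ∧ (t : EReal) < T})
    (hτcont : ContinuousOn τα {t : ℝ | 0 ≤ t ∧ (t : EReal) < T})
    (hτ : ∀ t : ℝ, 0 ≤ t → (t : EReal) < T →
      τα t = ∫ s in (0:ℝ)..t, Real.exp (-α * s) / (φ₁ s) ^ 2)
    (hσ : ∀ t : ℝ, 0 ≤ t → (t : EReal) < T →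
      σ t = -∫ s in (0:ℝ)..t, ∫ z in s..t, (φ₁ s / (φ₁ z) ^ 2) * Real.exp (α * (s - z)))
    (hφ : ∀ t : ℝ, 0 ≤ t → (t : EReal) < T →
      φ₁ t = ∫ a in Q, 1 / (1 + γ₀ a * τα t - ρ₀ a * σ t))
    (hτrange : ∀ t : ℝ, 0 ≤ t → (t : EReal) < T → 0 ≤ τα t ∧ τα t < -1 / m₀) :
    ∀ t : ℝ, 0 ≤ t → (t : EReal) < T → 0 < φ₁ t := by
    -- facts about Q
  have hQcompact : IsCompact Q := by
    rw [hQ]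
    have : {a : EuclideanSpace ℝ (Fin 2) | ∀ i, a i ∈ Set.Icc (0:ℝ) 1} =
        (WithLp.equiv 2 (Fin 2 → ℝ)).symm '' (Set.univ.pi fun _ => Set.Icc (0:ℝ) 1) := by
      ext a
      simp only [Set.mem_setOf_eq, Equiv.image_eq_preimage_symm, Set.mem_preimage, Set.mem_univ_pi]
      exact Iff.rfl
    rw [this]
    exact ((isCompact_univ_pi fun _ => isCompact_Icc).image (PiLp.continuous_toLp 2 _))
  have hQmeas : MeasurableSet Q := hQcompact.isClosed.measurableSet
  have hQvol : volume Q = 1 := by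
    have heq : Q = (MeasurableEquiv.toLp 2 (Fin 2 → ℝ)).symm ⁻¹'
        (Set.univ.pi fun _ => Set.Icc (0:ℝ) 1) := by
      rw [hQ]; ext a
      simp only [Set.mem_setOf_eq, Set.mem_preimage, Set.mem_univ_pi]
      exact Iff.rfl
    rw [heq, (EuclideanSpace.volume_preserving_symm_measurableEquiv_toLp (Fin 2)).measure_preimage
      ((MeasurableSet.univ_pi fun _ => measurableSet_Icc)).nullMeasurableSet]
    rw [volume_pi_pi]
    simp [Real.volume_Icc]
  -- key lemma: as soon as σ t₁ ≤ 0, the formula for φ₁ gives positivity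
  have key : ∀ t₁ : ℝ, 0 ≤ t₁ → (t₁ : EReal) < T → σ t₁ ≤ 0 → 0 < φ₁ t₁ := by
    intro t₁ h0 hT1 hσle
    obtain ⟨hτ0, hτlt⟩ := hτrange t₁ h0 hT1
    have hden : ∀ a ∈ Q, 0 < 1 + γ₀ a * τα t₁ - ρ₀ a * σ t₁ := by
      intro a ha
      have h1 : m₀ * τα t₁ ≤ γ₀ a * τα t₁ := mul_le_mul_of_nonneg_right (hm₀min a ha) hτ0
      have h2 : -1 < m₀ * τα t₁ := by
        have h := mul_lt_mul_of_neg_left hτlt hm₀neg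
        have : m₀ * (-1 / m₀) = -1 := by
          field_simp; rw [div_self (ne_of_lt hm₀neg)]
        linarith
      have h3 : ρ₀ a * σ t₁ ≤ 0 := mul_nonpos_of_nonneg_of_nonpos (hρnonneg a ha) hσle
      linarith
    rw [hφ t₁ h0 hT1]
    have hDcont : ContinuousOn (fun a => 1 + γ₀ a * τα t₁ - ρ₀ a * σ t₁) Q :=
      (continuousOn_const.add (hγcont.mul continuousOn_const)).sub
        (hρcont.mul continuousOn_const)
    have hfcont : ContinuousOn (fun a => 1 / (1 + γ₀ a * τα t₁ - ρ₀ a * σ t₁)) Q :=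
      continuousOn_const.div hDcont (fun a ha => (hden a ha).ne')
    have hint : IntegrableOn (fun a => 1 / (1 + γ₀ a * τα t₁ - ρ₀ a * σ t₁)) Q :=
      hfcont.integrableOn_compact hQcompact
    rw [setIntegral_pos_iff_support_of_nonneg_ae
      ((ae_restrict_iff' hQmeas).mpr (ae_of_all _ fun a ha => (one_div_pos.mpr (hden a ha)).le))
      hint]
    have hsub : Q ⊆ Function.support (fun a => 1 / (1 + γ₀ a * τα t₁ - ρ₀ a * σ t₁)) :=
      fun a ha => (one_div_pos.mpr (hden a ha)).ne'
    rw [Set.inter_eq_right.mpr hsub, hQvol]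
    norm_num
  -- main continuity argument
  intro t ht htT
  by_contra hle
  push_neg at hle
  set A : Set ℝ := {s | s ∈ Set.Icc 0 t ∧ φ₁ s ≤ 0} with hA
  have hAne : A.Nonempty := ⟨t, ⟨ht, le_refl t⟩, hle⟩
  have hsub : Set.Icc (0:ℝ) t ⊆ {u : ℝ | 0 ≤ u ∧ (u : EReal) < T} := fun u hu =>
    ⟨hu.1, lt_of_le_of_lt (by exact_mod_cast hu.2) htT⟩
  have hAclosed : IsClosed A := by
    have : A = Set.Icc 0 t ∩ φ₁ ⁻¹' (Set.Iic 0) := by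
      ext u; simp [hA, and_comm]
    rw [this]
    exact ContinuousOn.preimage_isClosed_of_isClosed (hφcont.mono hsub) isClosed_Icc isClosed_Iic
  have hAbdd : BddBelow A := ⟨0, fun u hu => hu.1.1⟩
  set t₁ := sInf A with ht₁
  have ht₁A : t₁ ∈ A := hAclosed.csInf_mem hAne hAbdd
  have ht₁0 : 0 ≤ t₁ := ht₁A.1.1
  have ht₁T : (t₁ : EReal) < T := (hsub ht₁A.1).2
  have hpos : ∀ u : ℝ, 0 ≤ u → u < t₁ → 0 < φ₁ u := by
    intro u hu hut₁
    by_contra hc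
    push_neg at hc
    have : u ∈ A := ⟨⟨hu, le_trans hut₁.le ht₁A.1.2⟩, hc⟩
    exact absurd (csInf_le hAbdd this) (not_le.mpr hut₁)
  have hσneg : σ t₁ ≤ 0 := by
    rw [hσ t₁ ht₁0 ht₁T]
    apply neg_nonpos_of_nonneg
    apply intervalIntegral.integral_nonneg ht₁0
    intro u hu
    rcases eq_or_lt_of_le hu.2 with heq | hlt
    · rw [heq, intervalIntegral.integral_same]
    · apply intervalIntegral.integral_nonneg hu.2
      intro z _
      exact mul_nonneg (div_nonneg (hpos u hu.1 hlt).le (sq_nonneg _)) (Real.exp_pos _).le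
  exact absurd (key t₁ ht₁0 ht₁T hσneg) (not_lt.mpr ht₁A.2)
end

section
/- Let a₀ ∈ ℝ², r > 0, ε > 0, m₀ ∈ ℝ, λ₁ ≥ λ₂ > 0, and let g : ℝ² → ℝ be a measurable function satisfying m₀ + (λ₂/2)|a − a₀|² ≤ g(a) ≤ m₀ + (λ₁/2)|a − a₀|² for all a in the closed disk D of radius r centered at a₀. Then (2π/λ₁)·ln(1 + λ₁r²/(2ε)) ≤ ∫_D 1/(ε + g(a) − m₀) da ≤ (2π/λ₂)·ln(1 + λ₂r²/(2ε)), where the integral is with respect to 2-dimensional Lebesgue measure. -/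
open MeasureTheory Real Set

lemma one_dim_int (r ε lam : ℝ) (hr : 0 < r) (hε : 0 < ε) (hlam : 0 < lam) :
    ∫ y in Ioc (0:ℝ) r, y / (ε + lam / 2 * y ^ 2) =
      (1 / lam) * Real.log (1 + lam * r ^ 2 / (2 * ε)) := by
  have hpos : ∀ y : ℝ, 0 < ε + lam / 2 * y ^ 2 := fun y => by positivity
  rw [← intervalIntegral.integral_of_le hr.le]
  have hderiv : ∀ y ∈ Set.uIcc (0:ℝ) r, HasDerivAt
      (fun y => (1 / lam) * Real.log (ε + lam / 2 * y ^ 2)) (y / (ε + lam / 2 * y ^ 2)) y := by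
    intro y _
    have h1 : HasDerivAt (fun y : ℝ => ε + lam / 2 * y ^ 2) (lam * y) y := by
      have := ((hasDerivAt_pow 2 y).const_mul (lam / 2)).const_add ε
      exact this.congr_deriv (by ring)
    have h2 := (h1.log (hpos y).ne').const_mul (1 / lam)
    refine h2.congr_deriv ?_
    field_simp
  rw [intervalIntegral.integral_eq_sub_of_hasDerivAt hderiv]
  · norm_num
    rw [← mul_sub, ← Real.log_div (hpos r).ne' hε.ne']
    congr 2
    field_simp
  · apply Continuous.intervalIntegrable
    exact continuous_id.div (by continuity) (fun y => (hpos y).ne')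

lemma radial_int (a₀ : EuclideanSpace ℝ (Fin 2)) (r ε lam : ℝ)
    (hr : 0 < r) (hε : 0 < ε) (hlam : 0 < lam) :
    ∫ a in Metric.closedBall a₀ r, 1 / (ε + lam / 2 * ‖a - a₀‖ ^ 2) =
      (2 * Real.pi / lam) * Real.log (1 + lam * r ^ 2 / (2 * ε)) := by
  have hpos : ∀ y : ℝ, 0 < ε + lam / 2 * y ^ 2 := fun y => by positivity
  set f : ℝ → ℝ := Set.indicator (Iic r) (fun y => 1 / (ε + lam / 2 * y ^ 2)) with hf
  have key : ∀ a : EuclideanSpace ℝ (Fin 2),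
      Set.indicator (Metric.closedBall a₀ r) (fun a => 1 / (ε + lam / 2 * ‖a - a₀‖ ^ 2)) a
        = f (‖a - a₀‖) := by
    intro a
    by_cases h : a ∈ Metric.closedBall a₀ r
    · rw [Set.indicator_of_mem h, hf, Set.indicator_of_mem]
      exact mem_closedBall_iff_norm.mp h
    · rw [Set.indicator_of_notMem h, hf, Set.indicator_of_notMem]
      intro hc
      exact h (mem_closedBall_iff_norm.mpr hc)
  rw [← integral_indicator (measurableSet_closedBall)]
  simp_rw [key]
  have htrans : ∫ a : EuclideanSpace ℝ (Fin 2), f (‖a - a₀‖) = ∫ a : EuclideanSpace ℝ (Fin 2), f ‖a‖ :=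
    integral_sub_right_eq_self (fun a => f ‖a‖) a₀
  rw [htrans, integral_fun_norm_addHaar volume f]
  have hdim : Module.finrank ℝ (EuclideanSpace ℝ (Fin 2)) = 2 := by simp
  have hball : (volume (Metric.ball (0 : EuclideanSpace ℝ (Fin 2)) 1)).toReal = Real.pi := by
    rw [EuclideanSpace.volume_ball]
    simp
    rw [ENNReal.toReal_ofReal (by positivity), Real.sq_sqrt Real.pi_pos.le,
      show (1:ℝ)+1 = 2 by norm_num, Real.Gamma_two, div_one]
  rw [hdim, measureReal_def, hball]
  have hIoi : ∫ y in Ioi (0:ℝ), y ^ (2 - 1) • f y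
      = ∫ y in Ioc (0:ℝ) r, y / (ε + lam / 2 * y ^ 2) := by
    have : ∀ y : ℝ, y ^ (2-1) • f y = Set.indicator (Iic r) (fun y => y / (ε + lam / 2 * y ^ 2)) y := by
      intro y
      by_cases h : y ∈ Iic r <;>
        simp [hf, Set.indicator_of_mem, Set.indicator_of_notMem, h, smul_eq_mul] <;> ring
    simp_rw [this]
    rw [integral_indicator measurableSet_Iic, Measure.restrict_restrict measurableSet_Iic,
      show Iic r ∩ Ioi (0:ℝ) = Ioc 0 r by rw [Set.inter_comm]; exact Set.Ioi_inter_Iic]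
  rw [hIoi, one_dim_int r ε lam hr hε hlam]
  rw [nsmul_eq_mul, smul_eq_mul]
  ring


/-- estimate (4.4) of Chen–Sarria. For a measurable `g` with
two-sided quadratic behavior `m₀ + (λ₂/2)|a−a₀|² ≤ g(a) ≤ m₀ + (λ₁/2)|a−a₀|²`
on the closed disk `D` of radius `r` about `a₀`, the integral
`∫_D da/(ε + g(a) − m₀)` is pinched between the corresponding logarithmic
expressions. Integrals are with respect to 2-dimensional Lebesgue measure. -/
theorem quadratic_minimum_log_estimate
    (a₀ : EuclideanSpace ℝ (Fin 2)) (r ε m₀ lam₁ lam₂ : ℝ)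
    (hr : 0 < r) (hε : 0 < ε) (hlam : lam₁ ≥ lam₂) (hlam₂ : 0 < lam₂)
    (g : EuclideanSpace ℝ (Fin 2) → ℝ) (hg : Measurable g)
    (hbound : ∀ a ∈ Metric.closedBall a₀ r,
      m₀ + (lam₂ / 2) * ‖a - a₀‖ ^ 2 ≤ g a ∧ g a ≤ m₀ + (lam₁ / 2) * ‖a - a₀‖ ^ 2) :
    (2 * Real.pi / lam₁) * Real.log (1 + lam₁ * r ^ 2 / (2 * ε)) ≤
        (∫ a in Metric.closedBall a₀ r, 1 / (ε + g a - m₀)) ∧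
      (∫ a in Metric.closedBall a₀ r, 1 / (ε + g a - m₀)) ≤
        (2 * Real.pi / lam₂) * Real.log (1 + lam₂ * r ^ 2 / (2 * ε)) := by
  have hlam₁ : 0 < lam₁ := lt_of_lt_of_le hlam₂ hlam
  set D := Metric.closedBall a₀ r with hD
  have hDmeas : MeasurableSet D := measurableSet_closedBall
  have hgpos : ∀ a ∈ D, 0 < ε + g a - m₀ := by
    intro a ha
    have h1 := (hbound a ha).1
    nlinarith [sq_nonneg ‖a - a₀‖]
  -- integrability of the main integrand
  have hint : IntegrableOn (fun a => 1 / (ε + g a - m₀)) D := by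
    have hmeas : AEStronglyMeasurable (fun a => 1 / (ε + g a - m₀)) (volume.restrict D) := by
      apply Measurable.aestronglyMeasurable
      exact ((measurable_const.add hg).sub measurable_const).inv.const_mul 1 |>.comp measurable_id
        |>.mono le_rfl le_rfl
    apply Integrable.mono'
      ((integrableOn_const measure_closedBall_lt_top.ne :
        IntegrableOn (fun _ => 1 / ε) D volume)) hmeas
    · filter_upwards [ae_restrict_mem hDmeas] with a ha
      have h := hgpos a ha
      rw [Real.norm_eq_abs, abs_of_pos (by positivity)]
      apply one_div_le_one_div_of_le hε
      nlinarith [(hbound a ha).1, sq_nonneg ‖a - a₀‖]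
  -- integrability of radial comparison functions
  have hcont : ∀ lam : ℝ, 0 < lam → IntegrableOn (fun a : EuclideanSpace ℝ (Fin 2) =>
      1 / (ε + lam / 2 * ‖a - a₀‖ ^ 2)) D := by
    intro lam hl
    apply ContinuousOn.integrableOn_compact (isCompact_closedBall a₀ r)
    apply Continuous.continuousOn
    apply continuous_const.div
    · continuity
    · intro a; positivity
  constructor
  · rw [← radial_int a₀ r ε lam₁ hr hε hlam₁]
    apply setIntegral_mono_on (hcont lam₁ hlam₁) hint hDmeas
    intro a ha
    apply one_div_le_one_div_of_le (hgpos a ha)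
    have := (hbound a ha).2
    linarith
  · rw [← radial_int a₀ r ε lam₂ hr hε hlam₂]
    apply setIntegral_mono_on hint (hcont lam₂ hlam₂) hDmeas
    intro a ha
    have hd : 0 < ε + lam₂ / 2 * ‖a - a₀‖ ^ 2 := by positivity
    apply one_div_le_one_div_of_le hd
    have := (hbound a ha).1
    linarith
end

section
/- Let Q = [0,1]² ⊂ ℝ² and let γ₀ : Q → ℝ be continuous, attaining its minimum m₀ < 0 exactly at one point a₀ in the interior of Q; suppose there exist r > 0 and λ₁ ≥ λ₂ > 0 such that the closed disk of radius r about a₀ lies in Q and m₀ + (λ₂/2)|a − a₀|² ≤ γ₀(a) ≤ m₀ + (λ₁/2)|a − a₀|² for all a with |a − a₀| ≤ r. Set τ* = −1/m₀. Then there exist δ ∈ (0, τ*) and constants c > 0, C > 0 such that for every τ with 0 < τ* − τ < δ: c·(−ln(τ* − τ)) ≤ ∫_Q 1/(1 + γ₀(a)·τ) da ≤ C·(−ln(τ* − τ)). -/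
open MeasureTheory Real Set

private lemma oneD' (A B r : ℝ) (hA : 0 < A) (hB : 0 < B) :
    ∫ y in (0:ℝ)..r, y * (A + B * y ^ 2)⁻¹
      = (1 / (2 * B)) * (Real.log (A + B * r ^ 2) - Real.log A) := by
  have hpos : ∀ y : ℝ, 0 < A + B * y ^ 2 := fun y =>
    add_pos_of_pos_of_nonneg hA (mul_nonneg hB.le (sq_nonneg y))
  have hderiv : ∀ y ∈ Set.uIcc (0:ℝ) r,
      HasDerivAt (fun y => (1 / (2 * B)) * Real.log (A + B * y ^ 2))
        (y * (A + B * y ^ 2)⁻¹) y := by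
    intro y _
    have h1 : HasDerivAt (fun y : ℝ => A + B * y ^ 2) (B * (2 * y)) y := by
      simpa using (((hasDerivAt_pow 2 y)).const_mul B).const_add A
    have h3 := ((Real.hasDerivAt_log (hpos y).ne').comp y h1).const_mul (1 / (2 * B))
    refine (h3 : HasDerivAt (fun y => (1 / (2 * B)) * Real.log (A + B * y ^ 2)) _ y).congr_deriv ?_
    field_simp
  have hcont : Continuous fun y : ℝ => y * (A + B * y ^ 2)⁻¹ :=
    continuous_id.mul ((continuous_const.add (continuous_const.mul (continuous_pow 2))).inv₀
      (fun y => (hpos y).ne'))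
  rw [intervalIntegral.integral_eq_sub_of_hasDerivAt hderiv (hcont.intervalIntegrable 0 r)]
  simp [mul_sub]

private lemma ball_vol' : (volume (Metric.ball (0 : EuclideanSpace ℝ (Fin 2)) 1)).toReal = π := by
  rw [EuclideanSpace.volume_ball]
  norm_num [Real.sq_sqrt Real.pi_pos.le, Real.Gamma_two, Real.pi_pos.le]

private lemma radial0' (A B r : ℝ) (hA : 0 < A) (hB : 0 < B) (hr : 0 < r) :
    ∫ a : EuclideanSpace ℝ (Fin 2) in Metric.closedBall 0 r, (A + B * ‖a‖ ^ 2)⁻¹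
      = (π / B) * (Real.log (A + B * r ^ 2) - Real.log A) := by
  have key := integral_fun_norm_addHaar (volume : Measure (EuclideanSpace ℝ (Fin 2)))
    (Set.indicator (Set.Icc 0 r) (fun y => (A + B * y ^ 2)⁻¹))
  have hdim : Module.finrank ℝ (EuclideanSpace ℝ (Fin 2)) = 2 := by
    simp [finrank_euclideanSpace]
  rw [hdim] at key
  have hLHS : (∫ x : EuclideanSpace ℝ (Fin 2),
      Set.indicator (Set.Icc 0 r) (fun y => (A + B * y ^ 2)⁻¹) ‖x‖)
      = ∫ a : EuclideanSpace ℝ (Fin 2) in Metric.closedBall 0 r, (A + B * ‖a‖ ^ 2)⁻¹ := by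
    rw [← integral_indicator measurableSet_closedBall]
    congr 1
    ext x
    by_cases hx : x ∈ Metric.closedBall (0 : EuclideanSpace ℝ (Fin 2)) r
    · rw [Set.indicator_of_mem hx, Set.indicator_of_mem]
      exact ⟨norm_nonneg x, by simpa [mem_closedBall_zero_iff] using hx⟩
    · rw [Set.indicator_of_notMem hx, Set.indicator_of_notMem]
      intro hmem
      exact hx (by simpa [mem_closedBall_zero_iff] using hmem.2)
  have hIoc : Set.Ioi (0:ℝ) ∩ Set.Icc 0 r = Set.Ioc 0 r := by
    ext x
    simp only [Set.mem_inter_iff, Set.mem_Ioi, Set.mem_Icc, Set.mem_Ioc]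
    exact ⟨fun h => ⟨h.1, h.2.2⟩, fun h => ⟨h.1, h.1.le, h.2⟩⟩
  have hRHS : (∫ y in Set.Ioi (0:ℝ),
      y ^ (2 - 1) • Set.indicator (Set.Icc 0 r) (fun y => (A + B * y ^ 2)⁻¹) y)
      = ∫ y in (0:ℝ)..r, y * (A + B * y ^ 2)⁻¹ := by
    have : ∀ y : ℝ, y ^ (2 - 1) • Set.indicator (Set.Icc 0 r) (fun y => (A + B * y ^ 2)⁻¹) y
        = Set.indicator (Set.Icc 0 r) (fun y => y * (A + B * y ^ 2)⁻¹) y := by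
      intro y
      by_cases hy : y ∈ Set.Icc (0:ℝ) r <;>
        simp [Set.indicator_of_mem, Set.indicator_of_notMem, hy]
    simp_rw [this]
    rw [setIntegral_indicator measurableSet_Icc, hIoc,
      intervalIntegral.integral_of_le hr.le]
  rw [hLHS, hRHS, oneD' A B r hA hB, measureReal_def, ball_vol'] at key
  rw [key]
  simp only [nsmul_eq_mul, smul_eq_mul, Nat.cast_ofNat]
  field_simp

private lemma radial' (A B r : ℝ) (hA : 0 < A) (hB : 0 < B) (hr : 0 < r)
    (x₀ : EuclideanSpace ℝ (Fin 2)) :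
    ∫ a in Metric.closedBall x₀ r, (A + B * ‖a - x₀‖ ^ 2)⁻¹
      = (π / B) * (Real.log (A + B * r ^ 2) - Real.log A) := by
  have key := MeasureTheory.integral_sub_right_eq_self (μ := volume)
    (Set.indicator (Metric.closedBall (0 : EuclideanSpace ℝ (Fin 2)) r)
      (fun a => (A + B * ‖a‖ ^ 2)⁻¹)) x₀
  rw [integral_indicator measurableSet_closedBall, radial0' A B r hA hB hr] at key
  rw [← key, ← integral_indicator measurableSet_closedBall]
  congr 1
  ext x
  by_cases hx : x ∈ Metric.closedBall x₀ r
  · rw [Set.indicator_of_mem hx, Set.indicator_of_mem]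
    simpa [mem_closedBall_zero_iff, dist_eq_norm] using Metric.mem_closedBall.mp hx
  · rw [Set.indicator_of_notMem hx, Set.indicator_of_notMem]
    intro hmem
    exact hx (by simpa [mem_closedBall_zero_iff, dist_eq_norm] using hmem)

set_option maxHeartbeats 1000000 in
/-- estimate (4.5) of Chen–Sarria, following Constantin.
Under the quadratic nondegeneracy hypothesis on `γ₀` at its unique negative
minimum `m₀` (attained at `a₀` in the interior of `Q = [0,1]²`), the integral
`∫_Q da/(1 + γ₀(a)τ)` blows up logarithmically as `τ ↗ τ* = −1/m₀`.
Integrals over `Q` are with respect to 2-dimensional Lebesgue measure. -/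
theorem log_blowup_rate_first_integral
    (Q : Set (EuclideanSpace ℝ (Fin 2)))
    (hQ : Q = {a : EuclideanSpace ℝ (Fin 2) | ∀ i, a i ∈ Set.Icc (0:ℝ) 1})
    (γ₀ : EuclideanSpace ℝ (Fin 2) → ℝ) (hcont : ContinuousOn γ₀ Q)
    (m₀ : ℝ) (hm₀neg : m₀ < 0)
    (a₀ : EuclideanSpace ℝ (Fin 2)) (ha₀ : a₀ ∈ interior Q)
    (hmin : γ₀ a₀ = m₀)
    (hunique : ∀ a ∈ Q, a ≠ a₀ → m₀ < γ₀ a)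
    (r lam₁ lam₂ : ℝ) (hr : 0 < r) (hlam : lam₁ ≥ lam₂) (hlam₂ : 0 < lam₂)
    (hball : Metric.closedBall a₀ r ⊆ Q)
    (hquad : ∀ a ∈ Metric.closedBall a₀ r,
      m₀ + (lam₂ / 2) * ‖a - a₀‖ ^ 2 ≤ γ₀ a ∧ γ₀ a ≤ m₀ + (lam₁ / 2) * ‖a - a₀‖ ^ 2) :
    ∃ δ ∈ Set.Ioo (0:ℝ) (-1 / m₀), ∃ c > (0:ℝ), ∃ C > (0:ℝ),
      ∀ τ : ℝ, 0 < -1 / m₀ - τ → -1 / m₀ - τ < δ →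
        c * (-Real.log (-1 / m₀ - τ)) ≤ (∫ a in Q, 1 / (1 + γ₀ a * τ)) ∧
        (∫ a in Q, 1 / (1 + γ₀ a * τ)) ≤ C * (-Real.log (-1 / m₀ - τ)) := by
  have hm₀ : m₀ ≠ 0 := hm₀neg.ne
  set τs : ℝ := -1 / m₀ with hτsdef
  have hτs : 0 < τs := by
    rw [hτsdef, div_pos_iff]
    right
    exact ⟨by norm_num, hm₀neg⟩
  -- compactness of Q
  have hQcomp : IsCompact Q := by
    rw [hQ]
    have hcp : IsCompact (Set.univ.pi fun _ : Fin 2 => Set.Icc (0:ℝ) 1) :=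
      isCompact_univ_pi fun _ => isCompact_Icc
    have h2 := hcp.image ((EuclideanSpace.equiv (Fin 2) ℝ).symm :
        (Fin 2 → ℝ) ≃L[ℝ] EuclideanSpace ℝ (Fin 2)).continuous
    convert h2 using 1
    ext a
    simp only [Set.mem_setOf_eq, Set.mem_image, Set.mem_pi, Set.mem_univ, true_implies]
    constructor
    · intro h
      exact ⟨(EuclideanSpace.equiv (Fin 2) ℝ) a, fun i => h i, by simp⟩
    · rintro ⟨y, hy, rfl⟩ i
      exact hy i
  have hQmeas : MeasurableSet Q := hQcomp.isClosed.measurableSet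
  have hγ₀ge : ∀ a ∈ Q, m₀ ≤ γ₀ a := by
    intro a ha
    by_cases h : a = a₀
    · rw [h, hmin]
    · exact (hunique a ha h).le
  -- uniform gap away from the ball
  obtain ⟨η, hηpos, hη⟩ : ∃ η > (0:ℝ), ∀ a ∈ Q \ Metric.ball a₀ r, m₀ + η ≤ γ₀ a := by
    by_cases hS : (Q \ Metric.ball a₀ r).Nonempty
    · have hScomp : IsCompact (Q \ Metric.ball a₀ r) := hQcomp.diff Metric.isOpen_ball
      obtain ⟨a₁, ha₁, hmin₁⟩ := hScomp.exists_isMinOn hS (hcont.mono diff_subset)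
      have hne : a₁ ≠ a₀ := by
        intro h
        exact ha₁.2 (h ▸ Metric.mem_ball_self hr)
      refine ⟨γ₀ a₁ - m₀, by linarith only [hunique a₁ ha₁.1 hne], fun a ha => ?_⟩
      have h2 : γ₀ a₁ ≤ γ₀ a := hmin₁ ha
      linarith only [h2]
    · exact ⟨1, one_pos, fun a ha => (hS ⟨a, ha⟩).elim⟩
  have hVfin : volume Q < ⊤ := hQcomp.measure_lt_top
  set V : ℝ := (volume Q).toReal with hVdef
  have hV0 : 0 ≤ V := ENNReal.toReal_nonneg
  have hlam₁ : 0 < lam₁ := lt_of_lt_of_le hlam₂ hlam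
  set B₁ : ℝ := lam₁ * τs / 2 with hB₁def
  set B₂ : ℝ := lam₂ * τs / 4 with hB₂def
  have hB₁ : 0 < B₁ := by positivity
  have hB₂ : 0 < B₂ := by positivity
  set K : ℝ := |Real.log (-m₀ * τs + B₂ * r ^ 2)| + |Real.log (-m₀)| + 1 with hKdef
  have hK1 : 1 ≤ K := by
    rw [hKdef]
    linarith only [abs_nonneg (Real.log (-m₀ * τs + B₂ * r ^ 2)), abs_nonneg (Real.log (-m₀))]
  set c : ℝ := π / (2 * B₁) with hcdef
  have hc : 0 < c := by positivity
  set C : ℝ := π / B₂ * K + 2 * V / (η * τs) with hCdef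
  have hC : 0 < C := by
    have h1 : 0 < π / B₂ * K := by positivity
    have h2 : 0 ≤ 2 * V / (η * τs) := by positivity
    rw [hCdef]
    exact add_pos_of_pos_of_nonneg h1 h2
  have hK0 : 0 < K := lt_of_lt_of_le one_pos hK1
  set M : ℝ := max (Real.log (-m₀) - Real.log (B₁ * r ^ 2)) 1 with hMdef
  have hM1 : 1 ≤ M := le_max_right _ _
  have hM' : Real.log (-m₀) - Real.log (B₁ * r ^ 2) ≤ M := le_max_left _ _
  set δ : ℝ := min (τs / 2) (Real.exp (-(2 * M))) with hδdef
  have hδpos : 0 < δ := lt_min (half_pos hτs) (Real.exp_pos _)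
  have hδle : δ ≤ τs / 2 := min_le_left _ _
  have hδexp : δ ≤ Real.exp (-(2 * M)) := min_le_right _ _
  clear_value V K M δ
  refine ⟨δ, ⟨hδpos, lt_of_le_of_lt hδle (half_lt_self hτs)⟩, c, hc, C, hC, ?_⟩
  intro τ hτ1 hτ2
  set ε : ℝ := τs - τ with hεdef
  have hε : 0 < ε := hτ1
  clear_value ε
  have hετ2 : ε < τs / 2 := lt_of_lt_of_le hτ2 hδle
  have hεexp : ε < Real.exp (-(2 * M)) := lt_of_lt_of_le hτ2 hδexp
  have hτε : τ = τs - ε := by rw [hεdef]; ring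
  have hτpos : 0 < τ := by rw [hτε]; linarith only [hετ2, hτs]
  have hττs : τ < τs := by rw [hτε]; linarith only [hε]
  have hτhalf : τs / 2 < τ := by rw [hτε]; linarith only [hετ2]
  have hlogε : Real.log ε < -(2 * M) := by
    calc Real.log ε < Real.log (Real.exp (-(2 * M))) := Real.log_lt_log hε hεexp
    _ = -(2 * M) := Real.log_exp _
  set L : ℝ := -Real.log ε with hLdef
  clear_value L
  have hL2M : 2 * M < L := by rw [hLdef]; linarith only [hlogε]
  have hL1 : 1 ≤ L := by linarith only [hL2M, hM1]
  set A : ℝ := 1 + m₀ * τ with hAdef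
  clear_value A
  have hAε : A = -m₀ * ε := by
    rw [hAdef, hεdef, hτsdef]
    field_simp
    ring
  have hA : 0 < A := by
    rw [hAε]
    have hm : 0 < -m₀ := by linarith only [hm₀neg]
    positivity
  have hA' : 0 < 1 + m₀ * τ := hAdef ▸ hA
  have hden : ∀ a ∈ Q, 0 < 1 + γ₀ a * τ := by
    intro a ha
    have h1 := mul_le_mul_of_nonneg_right (hγ₀ge a ha) hτpos.le
    linarith only [h1, hA']
  -- integrability
  have hcontg : ContinuousOn (fun a => 1 / (1 + γ₀ a * τ)) Q :=
    continuousOn_const.div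
      (continuousOn_const.add (hcont.mul continuousOn_const))
      (fun a ha => (hden a ha).ne')
  have hint : IntegrableOn (fun a => 1 / (1 + γ₀ a * τ)) Q :=
    hcontg.integrableOn_compact hQcomp
  have hintcb : IntegrableOn (fun a => 1 / (1 + γ₀ a * τ)) (Metric.closedBall a₀ r) :=
    hint.mono_set hball
  have hintrest : IntegrableOn (fun a => 1 / (1 + γ₀ a * τ)) (Q \ Metric.closedBall a₀ r) :=
    hint.mono_set diff_subset
  have hcomp_int : ∀ B' : ℝ, 0 < B' →
      IntegrableOn (fun a => (A + B' * ‖a - a₀‖ ^ 2)⁻¹) (Metric.closedBall a₀ r) := by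
    intro B' hB'
    refine (Continuous.continuousOn ?_).integrableOn_compact (isCompact_closedBall _ _)
    exact (continuous_const.add (continuous_const.mul
      ((continuous_id.sub continuous_const).norm.pow 2))).inv₀
      (fun a => (add_pos_of_pos_of_nonneg hA (mul_nonneg hB'.le (sq_nonneg _))).ne')
  have hg0 : 0 ≤ᵐ[volume.restrict Q] (fun a => 1 / (1 + γ₀ a * τ)) :=
    ae_restrict_of_forall_mem hQmeas (fun a ha => (div_pos one_pos (hden a ha)).le)
  -- ### Lower bound ###
  have hlow_pt : ∀ a ∈ Metric.closedBall a₀ r,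
      (A + B₁ * ‖a - a₀‖ ^ 2)⁻¹ ≤ 1 / (1 + γ₀ a * τ) := by
    intro a ha
    have hq := (hquad a ha).2
    have h1 : 1 + γ₀ a * τ ≤ A + B₁ * ‖a - a₀‖ ^ 2 := by
      have h2 : γ₀ a * τ ≤ (m₀ + lam₁ / 2 * ‖a - a₀‖ ^ 2) * τ :=
        mul_le_mul_of_nonneg_right hq hτpos.le
      have h3 : lam₁ / 2 * ‖a - a₀‖ ^ 2 * τ ≤ B₁ * ‖a - a₀‖ ^ 2 := by
        have h4 := mul_le_mul_of_nonneg_left hττs.le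
          (show (0:ℝ) ≤ lam₁ / 2 * ‖a - a₀‖ ^ 2 by positivity)
        have h5 : lam₁ / 2 * ‖a - a₀‖ ^ 2 * τs = B₁ * ‖a - a₀‖ ^ 2 := by
          rw [hB₁def]; ring
        linarith only [h4, h5]
      have h6 : (m₀ + lam₁ / 2 * ‖a - a₀‖ ^ 2) * τ
          = m₀ * τ + lam₁ / 2 * ‖a - a₀‖ ^ 2 * τ := by ring
      rw [hAdef]
      rw [h6] at h2
      linarith only [h2, h3]
    have := one_div_le_one_div_of_le (hden a (hball ha)) h1
    simpa [one_div] using this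
  have hlb1 : ∫ a in Metric.closedBall a₀ r, (A + B₁ * ‖a - a₀‖ ^ 2)⁻¹
      ≤ ∫ a in Metric.closedBall a₀ r, 1 / (1 + γ₀ a * τ) :=
    setIntegral_mono_on (hcomp_int B₁ hB₁) hintcb measurableSet_closedBall hlow_pt
  have hlb2 : (∫ a in Metric.closedBall a₀ r, 1 / (1 + γ₀ a * τ))
      ≤ ∫ a in Q, 1 / (1 + γ₀ a * τ) :=
    setIntegral_mono_set hint hg0 (HasSubset.Subset.eventuallyLE hball)
  have hrad1 := radial' A B₁ r hA hB₁ hr a₀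
  have hlogA : Real.log A = Real.log (-m₀) + Real.log ε := by
    rw [hAε, Real.log_mul (by linarith only [hm₀neg]) hε.ne']
  have hlog1 : Real.log (B₁ * r ^ 2) ≤ Real.log (A + B₁ * r ^ 2) :=
    Real.log_le_log (by positivity) (by linarith only [hA])
  have hlbf : c * L ≤ (π / B₁) * (Real.log (A + B₁ * r ^ 2) - Real.log A) := by
    have hbr : L / 2 ≤ Real.log (A + B₁ * r ^ 2) - Real.log A := by
      rw [hlogA]
      have hle : Real.log ε = -L := by rw [hLdef]; ring
      rw [hle]
      linarith only [hlog1, hM', hL2M]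
    calc c * L = (π / B₁) * (L / 2) := by rw [hcdef]; ring
    _ ≤ _ := mul_le_mul_of_nonneg_left hbr (by positivity)
  have hlower : c * L ≤ ∫ a in Q, 1 / (1 + γ₀ a * τ) := by
    calc c * L ≤ (π / B₁) * (Real.log (A + B₁ * r ^ 2) - Real.log A) := hlbf
    _ = ∫ a in Metric.closedBall a₀ r, (A + B₁ * ‖a - a₀‖ ^ 2)⁻¹ := hrad1.symm
    _ ≤ ∫ a in Metric.closedBall a₀ r, 1 / (1 + γ₀ a * τ) := hlb1
    _ ≤ _ := hlb2
  -- ### Upper bound ###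
  have hup_pt : ∀ a ∈ Metric.closedBall a₀ r,
      1 / (1 + γ₀ a * τ) ≤ (A + B₂ * ‖a - a₀‖ ^ 2)⁻¹ := by
    intro a ha
    have hq := (hquad a ha).1
    have h1 : A + B₂ * ‖a - a₀‖ ^ 2 ≤ 1 + γ₀ a * τ := by
      have h2 : (m₀ + lam₂ / 2 * ‖a - a₀‖ ^ 2) * τ ≤ γ₀ a * τ :=
        mul_le_mul_of_nonneg_right hq hτpos.le
      have h3 : B₂ * ‖a - a₀‖ ^ 2 ≤ lam₂ / 2 * ‖a - a₀‖ ^ 2 * τ := by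
        have h4 := mul_le_mul_of_nonneg_left hτhalf.le
          (show (0:ℝ) ≤ lam₂ / 2 * ‖a - a₀‖ ^ 2 by positivity)
        have h5 : lam₂ / 2 * ‖a - a₀‖ ^ 2 * (τs / 2) = B₂ * ‖a - a₀‖ ^ 2 := by
          rw [hB₂def]; ring
        linarith only [h4, h5]
      have h6 : (m₀ + lam₂ / 2 * ‖a - a₀‖ ^ 2) * τ
          = m₀ * τ + lam₂ / 2 * ‖a - a₀‖ ^ 2 * τ := by ring
      rw [hAdef]
      rw [h6] at h2
      linarith only [h2, h3]
    have hpos2 : 0 < A + B₂ * ‖a - a₀‖ ^ 2 :=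
      add_pos_of_pos_of_nonneg hA (mul_nonneg hB₂.le (by positivity))
    have := one_div_le_one_div_of_le hpos2 h1
    simpa [one_div] using this
  have hub1 : (∫ a in Metric.closedBall a₀ r, 1 / (1 + γ₀ a * τ))
      ≤ ∫ a in Metric.closedBall a₀ r, (A + B₂ * ‖a - a₀‖ ^ 2)⁻¹ :=
    setIntegral_mono_on hintcb (hcomp_int B₂ hB₂) measurableSet_closedBall hup_pt
  have hrad2 := radial' A B₂ r hA hB₂ hr a₀
  have hubf : (π / B₂) * (Real.log (A + B₂ * r ^ 2) - Real.log A) ≤ π / B₂ * K * L := by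
    have h1 : Real.log (A + B₂ * r ^ 2) ≤ |Real.log (-m₀ * τs + B₂ * r ^ 2)| := by
      have hp : 0 < A + B₂ * r ^ 2 := add_pos hA (mul_pos hB₂ (by positivity))
      have hAτs : A ≤ -m₀ * τs := by
        rw [hAε]
        have h7 : ε ≤ τs := by linarith only [hετ2, hτs]
        have := mul_le_mul_of_nonneg_left h7 (show (0:ℝ) ≤ -m₀ by linarith only [hm₀neg])
        linarith only [this]
      calc Real.log (A + B₂ * r ^ 2) ≤ Real.log (-m₀ * τs + B₂ * r ^ 2) :=
            Real.log_le_log hp (by linarith only [hAτs])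
      _ ≤ _ := le_abs_self _
    have h2 : -Real.log A ≤ |Real.log (-m₀)| + L := by
      rw [hlogA]
      have hle : Real.log ε = -L := by rw [hLdef]; ring
      rw [hle]
      linarith only [neg_abs_le (Real.log (-m₀))]
    have hbr : Real.log (A + B₂ * r ^ 2) - Real.log A ≤ K * L := by
      have hstep : Real.log (A + B₂ * r ^ 2) - Real.log A ≤ (K - 1) + L := by
        rw [hKdef]
        linarith only [h1, h2]
      have hmul : (0:ℝ) ≤ (K - 1) * (L - 1) :=
        mul_nonneg (by linarith only [hK1]) (by linarith only [hL1])
      linarith only [hstep, hmul]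
    calc (π / B₂) * (Real.log (A + B₂ * r ^ 2) - Real.log A) ≤ (π / B₂) * (K * L) :=
          mul_le_mul_of_nonneg_left hbr (by positivity)
    _ = π / B₂ * K * L := by ring
  have hrest : (∫ a in Q \ Metric.closedBall a₀ r, 1 / (1 + γ₀ a * τ)) ≤ 2 * V / (η * τs) := by
    have hbd : ∀ a ∈ Q \ Metric.closedBall a₀ r, ‖1 / (1 + γ₀ a * τ)‖ ≤ 2 / (η * τs) := by
      intro a ha
      have haQ : a ∈ Q := ha.1
      have haS : a ∈ Q \ Metric.ball a₀ r :=
        ⟨ha.1, fun h => ha.2 (Metric.ball_subset_closedBall h)⟩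
      have hγ := hη a haS
      have hd := hden a haQ
      have h1 : η * τs / 2 ≤ 1 + γ₀ a * τ := by
        have h2 : (m₀ + η) * τ ≤ γ₀ a * τ := mul_le_mul_of_nonneg_right hγ hτpos.le
        have h3 : η * (τs / 2) ≤ η * τ := mul_le_mul_of_nonneg_left hτhalf.le hηpos.le
        have h4 : (m₀ + η) * τ = m₀ * τ + η * τ := by ring
        rw [h4] at h2
        linarith only [h2, h3, hA']
      rw [Real.norm_eq_abs, abs_of_nonneg (div_pos one_pos hd).le,
        div_le_div_iff₀ hd (by positivity)]
      linarith only [h1]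
    have hμ : volume (Q \ Metric.closedBall a₀ r) < ⊤ :=
      lt_of_le_of_lt (measure_mono diff_subset) hVfin
    have hbig := norm_setIntegral_le_of_norm_le_const hμ hbd
    have hV' : (volume (Q \ Metric.closedBall a₀ r)).toReal ≤ V := by
      rw [hVdef]
      exact ENNReal.toReal_mono hVfin.ne (measure_mono diff_subset)
    calc (∫ a in Q \ Metric.closedBall a₀ r, 1 / (1 + γ₀ a * τ))
        ≤ ‖∫ a in Q \ Metric.closedBall a₀ r, 1 / (1 + γ₀ a * τ)‖ := le_norm_self _
    _ ≤ 2 / (η * τs) * (volume (Q \ Metric.closedBall a₀ r)).toReal := hbig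
    _ ≤ 2 / (η * τs) * V := mul_le_mul_of_nonneg_left hV' (by positivity)
    _ = 2 * V / (η * τs) := by ring
  have hsplit : (∫ a in Q, 1 / (1 + γ₀ a * τ))
      = (∫ a in Metric.closedBall a₀ r, 1 / (1 + γ₀ a * τ))
        + ∫ a in Q \ Metric.closedBall a₀ r, 1 / (1 + γ₀ a * τ) := by
    rw [← setIntegral_union disjoint_sdiff_right (hQmeas.diff measurableSet_closedBall)
      hintcb hintrest, union_diff_cancel hball]
  have hupper : (∫ a in Q, 1 / (1 + γ₀ a * τ)) ≤ C * L := by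
    have h1 : (∫ a in Metric.closedBall a₀ r, 1 / (1 + γ₀ a * τ)) ≤ π / B₂ * K * L := by
      calc (∫ a in Metric.closedBall a₀ r, 1 / (1 + γ₀ a * τ))
          ≤ ∫ a in Metric.closedBall a₀ r, (A + B₂ * ‖a - a₀‖ ^ 2)⁻¹ := hub1
      _ = (π / B₂) * (Real.log (A + B₂ * r ^ 2) - Real.log A) := hrad2
      _ ≤ π / B₂ * K * L := hubf
    have h2 : 2 * V / (η * τs) ≤ 2 * V / (η * τs) * L :=
      le_mul_of_one_le_right (by positivity) hL1
    have h3 : (π / B₂ * K + 2 * V / (η * τs)) * L = π / B₂ * K * L + 2 * V / (η * τs) * L := by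
      ring
    rw [hsplit, hCdef, h3]
    linarith only [h1, hrest, h2]
  exact ⟨hlower, hupper⟩
end

section
/- Let α > 0, τ* ∈ (0,∞), let g : [0,τ*) → ℝ be continuous with g(μ) > 0 for all μ, and suppose T := ∫₀^{τ*} g(μ) dμ is finite with α ≥ 1/T. Let τ : [0,S) → [0,τ*) be differentiable with τ(0) = 0 and τ'(t) = e^{−αt}/g(τ(t)) for all t ∈ [0,S), S ∈ (0,∞]. Then ∫₀^{τ(t)} g(μ) dμ < 1/α ≤ T for every t ∈ [0,S). Moreover: (i) if α = 1/T and S = ∞, then τ(t) → τ* as t → ∞; (ii) if α > 1/T and S = ∞, then τ(t) → τ₁ as t → ∞, where τ₁ is the unique point of (0, τ*) with ∫₀^{τ₁} g(μ) dμ = 1/α. -/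
open MeasureTheory Set Filter


/-- Cases 2 and 3 of Theorem 2.2 of Chen–Sarria, at the
level of the time-change ODE. If `T = ∫₀^{τ*} g` is finite and `α ≥ 1/T`,
then `∫₀^{τ(t)} g < 1/α ≤ T` for all `t`; if moreover `S = ∞`, then for
`α = 1/T` one has `τ(t) → τ*` as `t → ∞`, while for `α > 1/T` one has
`τ(t) → τ₁`, the unique point of `(0, τ*)` with `∫₀^{τ₁} g = 1/α`.
The interval `[0, S)`, `S ∈ (0, ∞]`, is encoded via `S : EReal`, `0 < S`. -/
theorem time_change_global_when_strong_damping
    (α τstar : ℝ) (hα : 0 < α) (hτstar : 0 < τstar)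
    (g : ℝ → ℝ) (hgcont : ContinuousOn g (Set.Ico 0 τstar))
    (hgpos : ∀ μ ∈ Set.Ico (0:ℝ) τstar, 0 < g μ)
    (hgint : MeasureTheory.IntegrableOn g (Set.Ioo 0 τstar))
    (T : ℝ) (hT : T = ∫ μ in Set.Ioo (0:ℝ) τstar, g μ)
    (hαT : 1 / T ≤ α)
    (S : EReal) (hS : 0 < S)
    (τ : ℝ → ℝ)
    (hmap : ∀ t : ℝ, 0 ≤ t → (t : EReal) < S → τ t ∈ Set.Ico 0 τstar)
    (hτ0 : τ 0 = 0)
    (hdiff : ∀ t : ℝ, 0 ≤ t → (t : EReal) < S → DifferentiableAt ℝ τ t)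
    (hode : ∀ t : ℝ, 0 ≤ t → (t : EReal) < S →
      deriv τ t = Real.exp (-α * t) / g (τ t)) :
    (∀ t : ℝ, 0 ≤ t → (t : EReal) < S →
        (∫ μ in (0:ℝ)..(τ t), g μ) < 1 / α ∧ 1 / α ≤ T) ∧
    (S = ⊤ → α = 1 / T → Filter.Tendsto τ Filter.atTop (nhds τstar)) ∧
    (S = ⊤ → 1 / T < α → ∃ τ₁ ∈ Set.Ioo (0:ℝ) τstar,
      (∫ μ in (0:ℝ)..τ₁, g μ) = 1 / α ∧
      (∀ τ₂ ∈ Set.Ioo (0:ℝ) τstar, (∫ μ in (0:ℝ)..τ₂, g μ) = 1 / α → τ₂ = τ₁) ∧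
      Filter.Tendsto τ Filter.atTop (nhds τ₁)) := by
  -- extended integrand, continuous on `Iio τstar`
  set gh : ℝ → ℝ := fun x => g (max x 0) with hgh
  have hghcont : ContinuousOn gh (Set.Iio τstar) := by
    apply hgcont.comp ((continuous_id.max continuous_const).continuousOn)
    intro x hx
    exact ⟨le_max_right _ _, max_lt hx hτstar⟩
  have hgheq : ∀ x ∈ Set.Icc (0:ℝ) τstar, gh x = g x := by
    intro x hx; simp [hgh, max_eq_left hx.1]
  have hghpos : ∀ x ∈ Set.Ioo (0:ℝ) τstar, 0 < gh x := by
    intro x hx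
    rw [hgheq x ⟨hx.1.le, hx.2.le⟩]
    exact hgpos x ⟨hx.1.le, hx.2⟩
  have hgint' : MeasureTheory.IntegrableOn g (Set.Icc 0 τstar) :=
    (integrableOn_Icc_iff_integrableOn_Ioo).mpr hgint
  have hghint : MeasureTheory.IntegrableOn gh (Set.Icc 0 τstar) :=
    hgint'.congr_fun (fun x hx => (hgheq x hx).symm) measurableSet_Icc
  set F : ℝ → ℝ := fun x => ∫ μ in (0:ℝ)..x, gh μ with hF
  have hF0 : F 0 = 0 := intervalIntegral.integral_same
  -- interval integrability within [0, τstar]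
  have hii : ∀ x y : ℝ, x ∈ Set.Icc (0:ℝ) τstar → y ∈ Set.Icc (0:ℝ) τstar →
      IntervalIntegrable gh MeasureTheory.volume x y := by
    intro x y hx hy
    apply MeasureTheory.IntegrableOn.intervalIntegrable
    apply hghint.mono_set
    intro z hz
    rw [Set.mem_uIcc] at hz
    rcases hz with hz | hz
    · exact ⟨le_trans hx.1 hz.1, le_trans hz.2 hy.2⟩
    · exact ⟨le_trans hy.1 hz.1, le_trans hz.2 hx.2⟩
  -- FTC derivative of F on `Iio τstar`
  have hFderiv : ∀ x : ℝ, x < τstar → HasDerivAt F (gh x) x := by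
    intro x hx
    have hsub : Set.uIcc (0:ℝ) x ⊆ Set.Iio τstar := by
      intro y hy
      rw [Set.mem_uIcc] at hy
      rcases hy with hy | hy
      · exact lt_of_le_of_lt hy.2 hx
      · exact lt_of_le_of_lt hy.2 hτstar
    have hint : IntervalIntegrable gh MeasureTheory.volume 0 x :=
      (hghcont.mono hsub).intervalIntegrable
    exact intervalIntegral.integral_hasDerivAt_right hint
      (hghcont.stronglyMeasurableAtFilter isOpen_Iio x hx)
      (hghcont.continuousAt (Iio_mem_nhds hx))
  -- strict monotonicity of F on [0, τstar]
  have hFmono : ∀ x y : ℝ, 0 ≤ x → x < y → y ≤ τstar → F x < F y := by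
    intro x y hx hxy hy
    have hx' : x ∈ Set.Icc (0:ℝ) τstar := ⟨hx, le_trans hxy.le hy⟩
    have hy' : y ∈ Set.Icc (0:ℝ) τstar := ⟨le_trans hx hxy.le, hy⟩
    have hadd := intervalIntegral.integral_add_adjacent_intervals
      (hii 0 x ⟨le_rfl, hτstar.le⟩ hx') (hii x y hx' hy')
    have hpos : 0 < ∫ μ in x..y, gh μ := by
      apply intervalIntegral.intervalIntegral_pos_of_pos_on (hii x y hx' hy') _ hxy
      intro z hz
      exact hghpos z ⟨lt_of_le_of_lt hx hz.1, lt_of_lt_of_le hz.2 hy⟩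
    have : F y = F x + ∫ μ in x..y, gh μ := by rw [hF]; dsimp only; rw [← hadd]
    rw [this]; linarith
  have hFmono' : ∀ x y : ℝ, 0 ≤ x → x ≤ y → y ≤ τstar → F x ≤ F y := by
    intro x y hx hxy hy
    rcases eq_or_lt_of_le hxy with rfl | h
    · exact le_rfl
    · exact (hFmono x y hx h hy).le
  -- F τstar = T
  have hFT : F τstar = T := by
    rw [hF]; dsimp only
    rw [intervalIntegral.integral_of_le hτstar.le, MeasureTheory.integral_Ioc_eq_integral_Ioo, hT]
    exact MeasureTheory.setIntegral_congr_fun measurableSet_Ioo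
      (fun x hx => hgheq x ⟨hx.1.le, hx.2.le⟩)
  have hT0 : 0 < T := by
    have := hFmono 0 τstar le_rfl hτstar le_rfl
    rw [hF0, hFT] at this; exact this
  have h1αT : 1 / α ≤ T := by
    rw [div_le_iff₀ hT0] at hαT
    rw [div_le_iff₀ hα]
    nlinarith
  -- the relation between the interval integral of g and F
  have hFg : ∀ x ∈ Set.Icc (0:ℝ) τstar, (∫ μ in (0:ℝ)..x, g μ) = F x := by
    intro x hx
    apply intervalIntegral.integral_congr
    intro z hz
    rw [Set.uIcc_of_le hx.1] at hz
    exact (hgheq z ⟨hz.1, le_trans hz.2 hx.2⟩).symm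
  -- key identity : F (τ t) = (1 - e^{-α t})/α
  have hkey : ∀ t : ℝ, 0 ≤ t → (t : EReal) < S →
      F (τ t) = (1 - Real.exp (-α * t)) / α := by
    intro t ht htS
    rcases eq_or_lt_of_le ht with rfl | ht'
    · rw [hτ0, hF0]; simp
    · set φ : ℝ → ℝ := fun u => F (τ u) + Real.exp (-α * u) / α with hφdef
      have hdom : ∀ s ∈ Set.Icc (0:ℝ) t, 0 ≤ s ∧ (s : EReal) < S := by
        intro s hs
        refine ⟨hs.1, lt_of_le_of_lt ?_ htS⟩
        exact_mod_cast EReal.coe_le_coe_iff.mpr hs.2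
      have hφderiv : ∀ s ∈ Set.Icc (0:ℝ) t, HasDerivAt φ 0 s := by
        intro s hs
        obtain ⟨hs0, hsS⟩ := hdom s hs
        have hτs := hmap s hs0 hsS
        have h1 : HasDerivAt τ (Real.exp (-α * s) / g (τ s)) s := by
          have h := (hdiff s hs0 hsS).hasDerivAt
          rwa [hode s hs0 hsS] at h
        have h2 : HasDerivAt F (gh (τ s)) (τ s) := hFderiv _ hτs.2
        have h3 := h2.comp s h1
        have hg0 : g (τ s) ≠ 0 := (hgpos _ hτs).ne'
        have hgh' : gh (τ s) = g (τ s) := hgheq _ ⟨hτs.1, hτs.2.le⟩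
        have h4 : HasDerivAt (fun u => F (τ u)) (Real.exp (-α * s)) s := by
          have : gh (τ s) * (Real.exp (-α * s) / g (τ s)) = Real.exp (-α * s) := by
            rw [hgh']; field_simp
          rw [← this]
          exact h3
        have h5 : HasDerivAt (fun u : ℝ => Real.exp (-α * u) / α) (-Real.exp (-α * s)) s := by
          have ha : HasDerivAt (fun u : ℝ => -α * u) (-α) s := by
            simpa using (hasDerivAt_id s).const_mul (-α)
          have hb := (ha.exp).div_const α
          have : Real.exp (-α * s) * (-α) / α = -Real.exp (-α * s) := by field_simp
          rwa [this] at hb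
        have h6 : HasDerivAt φ (Real.exp (-α * s) + -Real.exp (-α * s)) s := h4.add h5
        have hzero : Real.exp (-α * s) + -Real.exp (-α * s) = 0 := by ring
        rwa [hzero] at h6
      have hconst := constant_of_has_deriv_right_zero
        (f := φ) (a := 0) (b := t)
        (fun s hs => (hφderiv s hs).continuousAt.continuousWithinAt)
        (fun s hs => ((hφderiv s (Set.Ico_subset_Icc_self hs)).hasDerivWithinAt))
      have heq := hconst t ⟨ht, le_rfl⟩
      have hφ0 : φ 0 = 1 / α := by
        rw [hφdef]; dsimp only; rw [hτ0, hF0]; simp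
      rw [hφdef] at heq; dsimp only at heq
      rw [hτ0, hF0] at heq
      simp only [mul_zero, Real.exp_zero, zero_add] at heq
      field_simp at heq ⊢
      linarith
  -- part 1
  have hpart1 : ∀ t : ℝ, 0 ≤ t → (t : EReal) < S →
      (∫ μ in (0:ℝ)..(τ t), g μ) < 1 / α ∧ 1 / α ≤ T := by
    intro t ht htS
    have hτt := hmap t ht htS
    refine ⟨?_, h1αT⟩
    rw [hFg (τ t) ⟨hτt.1, hτt.2.le⟩, hkey t ht htS]
    have he := Real.exp_pos (-α * t)
    gcongr
    linarith
  -- limit of the RHS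
  have hlim : Tendsto (fun t : ℝ => (1 - Real.exp (-α*t))/α) atTop (nhds (1/α)) := by
    have h0 : Tendsto (fun t : ℝ => -α*t) atTop atBot :=
      (tendsto_const_mul_atBot_of_neg (by linarith : -α < 0)).mpr tendsto_id
    have h1 : Tendsto (fun t : ℝ => Real.exp (-α*t)) atTop (nhds 0) :=
      Real.tendsto_exp_atBot.comp h0
    have h2 : Tendsto (fun t : ℝ => (1 - Real.exp (-α*t))/α) atTop (nhds ((1-0)/α)) :=
      (Tendsto.sub tendsto_const_nhds h1).div_const α
    simpa using h2
  -- a generic convergence lemma: if F L = 1/α with L ∈ (0, τstar], then τ → L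
  have hconv : ∀ L : ℝ, 0 < L → L ≤ τstar → F L = 1/α → S = ⊤ →
      Tendsto τ atTop (nhds L) := by
    intro L hL0 hLτ hFL hStop
    rw [Metric.tendsto_atTop]
    intro ε hε
    set δ : ℝ := min ε L with hδdef
    have hδ0 : 0 < δ := lt_min hε hL0
    have hδε : δ ≤ ε := min_le_left _ _
    have hδL : δ ≤ L := min_le_right _ _
    have hlow : F (L - δ) < 1/α := by
      rw [← hFL]
      exact hFmono (L - δ) L (by linarith) (by linarith) hLτ
    have hev : ∀ᶠ t : ℝ in atTop, F (L - δ) < (1 - Real.exp (-α*t))/α :=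
      hlim.eventually (eventually_gt_nhds hlow)
    obtain ⟨N, hN⟩ := (hev.and (eventually_ge_atTop (0:ℝ))).exists_forall_of_atTop
    refine ⟨N, fun t htN => ?_⟩
    obtain ⟨hN1, hN2⟩ := hN t htN
    have htS : (t : EReal) < S := by rw [hStop]; exact EReal.coe_lt_top t
    have hτt := hmap t hN2 htS
    have hkeyt := hkey t hN2 htS
    -- lower bound : τ t > L - δ
    have hlow' : L - δ < τ t := by
      by_contra hcon
      push_neg at hcon
      have := hFmono' (τ t) (L - δ) hτt.1 hcon (by linarith)
      rw [hkeyt] at this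
      linarith
    -- upper bound : τ t < L + δ  (in fact F (τ t) < 1/α = F L so τ t < L... )
    have hup' : τ t < L + δ := by
      by_contra hcon
      push_neg at hcon
      have hLle : L ≤ τ t := by linarith
      have := hFmono' L (τ t) hL0.le hLle hτt.2.le
      rw [hkeyt, hFL] at this
      have he := Real.exp_pos (-α * t)
      have hlt : (1 - Real.exp (-α*t))/α < 1/α := by
        gcongr
        linarith
      linarith
    rw [Real.dist_eq, abs_lt]
    constructor <;> [linarith; linarith]
  refine ⟨hpart1, ?_, ?_⟩
  · -- case α = 1/T
    intro hStop hαeq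
    have hFτstar : F τstar = 1/α := by
      rw [hFT, hαeq, one_div_one_div]
    exact hconv τstar hτstar le_rfl hFτstar hStop
  · -- case α > 1/T
    intro hStop hαlt
    have h1αltT : 1/α < T := by
      rw [div_lt_iff₀ hT0] at hαlt
      rw [div_lt_iff₀ hα]
      nlinarith
    have hFcont : ContinuousOn F (Set.Icc 0 τstar) := by
      have h := intervalIntegral.continuousOn_primitive_interval
        (a := (0:ℝ)) (b := τstar) (f := gh) (μ := MeasureTheory.volume)
        (by rwa [Set.uIcc_of_le hτstar.le])
      rwa [Set.uIcc_of_le hτstar.le] at h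
    have hmem : (1/α) ∈ Set.Icc (F 0) (F τstar) := by
      rw [hF0, hFT]
      exact ⟨by positivity, h1αltT.le⟩
    obtain ⟨τ₁, hτ₁mem, hFτ₁⟩ := intermediate_value_Icc hτstar.le hFcont hmem
    have h1α0 : (0:ℝ) < 1/α := by positivity
    have hτ₁0 : 0 < τ₁ := by
      rcases eq_or_lt_of_le hτ₁mem.1 with heq | h
      · exfalso; rw [← heq, hF0] at hFτ₁; linarith
      · exact h
    have hτ₁lt : τ₁ < τstar := by
      rcases eq_or_lt_of_le hτ₁mem.2 with heq | h
      · exfalso; rw [heq, hFT] at hFτ₁; linarith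
      · exact h
    refine ⟨τ₁, ⟨hτ₁0, hτ₁lt⟩, ?_, ?_, ?_⟩
    · rw [hFg τ₁ hτ₁mem]; exact hFτ₁
    · intro τ₂ hτ₂ heq2
      have hFτ₂ : F τ₂ = 1/α := by rw [← hFg τ₂ ⟨hτ₂.1.le, hτ₂.2.le⟩]; exact heq2
      rcases lt_trichotomy τ₂ τ₁ with h | h | h
      · exfalso
        have := hFmono τ₂ τ₁ hτ₂.1.le h hτ₁mem.2
        rw [hFτ₁, hFτ₂] at this; linarith
      · exact h
      · exfalso
        have := hFmono τ₁ τ₂ hτ₁mem.1 h hτ₂.2.le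
        rw [hFτ₁, hFτ₂] at this; linarith
    · exact hconv τ₁ hτ₁0 hτ₁lt.le hFτ₁ hStop
end

section
/- Let α > 0, τ* ∈ (0,∞), let g : [0,τ*) → ℝ be continuous with g(μ) > 0 for all μ, and suppose T := ∫₀^{τ*} g(μ) dμ is finite with 0 < α < 1/T. Let S ∈ (0,∞], and let τ : [0,S) → [0,τ*) be differentiable with τ(0) = 0, τ'(t) = e^{−αt}/g(τ(t)) for all t ∈ [0,S), and suppose τ(t) → τ* as t → S⁻. Then S is finite and S = −(1/α)·ln(1 − α·T); moreover S > T. -/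
/-- Case 1 of Theorem 2.2 of Chen–Sarria, at the level of
the time-change ODE. If `T = ∫₀^{τ*} g` is finite, `0 < α < 1/T`, and the
solution `τ` of `τ'(t) = e^{−αt}/g(τ(t))`, `τ(0) = 0`, on `[0, S)` satisfies
`τ(t) → τ*` as `t → S⁻`, then `S` is finite with
`S = −(1/α) ln(1 − αT) > T`.  Here `S ∈ (0, ∞]` is an `EReal`, and the
left-limit filter `t → S⁻` is the comap under `ℝ → EReal` of `𝓝[<] S`. -/
theorem time_change_blowup_time_weak_damping
    (α τstar : ℝ) (hα : 0 < α) (hτstar : 0 < τstar)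
    (g : ℝ → ℝ) (hgcont : ContinuousOn g (Set.Ico 0 τstar))
    (hgpos : ∀ μ ∈ Set.Ico (0:ℝ) τstar, 0 < g μ)
    (hgint : MeasureTheory.IntegrableOn g (Set.Ioo 0 τstar))
    (T : ℝ) (hT : T = ∫ μ in Set.Ioo (0:ℝ) τstar, g μ)
    (hαT : α < 1 / T)
    (S : EReal) (hS : 0 < S)
    (τ : ℝ → ℝ)
    (hmap : ∀ t : ℝ, 0 ≤ t → (t : EReal) < S → τ t ∈ Set.Ico 0 τstar)
    (hτ0 : τ 0 = 0)
    (hdiff : ∀ t : ℝ, 0 ≤ t → (t : EReal) < S → DifferentiableAt ℝ τ t)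
    (hode : ∀ t : ℝ, 0 ≤ t → (t : EReal) < S →
      deriv τ t = Real.exp (-α * t) / g (τ t))
    (hlim : Filter.Tendsto τ
      (Filter.comap (fun t : ℝ => (t : EReal)) (nhdsWithin S (Set.Iio S)))
      (nhds τstar)) :
    S = ((-(1 / α) * Real.log (1 - α * T) : ℝ) : EReal) ∧ (T : EReal) < S := by
  classical
  have hgIntI : IntervalIntegrable g MeasureTheory.volume 0 τstar := by
    rw [intervalIntegrable_iff_integrableOn_Ioo_of_le hτstar.le]
    exact hgint
  have hTval : T = ∫ x in (0:ℝ)..τstar, g x := by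
    rw [hT, intervalIntegral.integral_of_le hτstar.le,
      MeasureTheory.integral_Ioc_eq_integral_Ioo]
  have hTpos : 0 < T := by
    rw [hTval]
    exact intervalIntegral.intervalIntegral_pos_of_pos_on hgIntI
      (fun x hx => hgpos x ⟨hx.1.le, hx.2⟩) hτstar
  -- the key ODE identity
  have key : ∀ t₀ : ℝ, 0 ≤ t₀ → (t₀ : EReal) < S →
      (∫ x in (0:ℝ)..(τ t₀), g x) = (1 - Real.exp (-α * t₀)) / α := by
    intro t₀ ht₀0 ht₀S
    have hIS : ∀ x ∈ Set.Icc (0:ℝ) t₀, (x : EReal) < S := by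
      intro x hx
      exact lt_of_le_of_lt (EReal.coe_le_coe_iff.mpr hx.2) ht₀S
    have hmem : ∀ x ∈ Set.Icc (0:ℝ) t₀, τ x ∈ Set.Ico 0 τstar := fun x hx =>
      hmap x hx.1 (hIS x hx)
    have hdiff' : ∀ x ∈ Set.Icc (0:ℝ) t₀, DifferentiableAt ℝ τ x := fun x hx =>
      hdiff x hx.1 (hIS x hx)
    have hcontτ : ContinuousOn τ (Set.Icc 0 t₀) := fun x hx =>
      (hdiff' x hx).continuousAt.continuousWithinAt
    have hmono : MonotoneOn τ (Set.Icc 0 t₀) := by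
      apply monotoneOn_of_deriv_nonneg (convex_Icc 0 t₀) hcontτ
      · intro x hx
        rw [interior_Icc] at hx
        exact (hdiff' x ⟨hx.1.le, hx.2.le⟩).differentiableWithinAt
      · intro x hx
        rw [interior_Icc] at hx
        have hx' : x ∈ Set.Icc (0:ℝ) t₀ := ⟨hx.1.le, hx.2.le⟩
        rw [hode x hx'.1 (hIS x hx')]
        exact div_nonneg (Real.exp_pos _).le (hgpos _ (hmem x hx')).le
    set c := τ t₀ with hc_def
    have hc : c ∈ Set.Ico (0:ℝ) τstar := hmem t₀ ⟨ht₀0, le_refl t₀⟩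
    set p : ℝ → ℝ := fun x => max 0 (min x c) with hp_def
    have hpcont : Continuous p := continuous_const.max (continuous_id.min continuous_const)
    have hpmem : ∀ x, p x ∈ Set.Icc 0 c := fun x =>
      ⟨le_max_left _ _, max_le hc.1 (min_le_right _ _)⟩
    set g' : ℝ → ℝ := fun x => g (p x) with hg'_def
    have hsub : Set.Icc (0:ℝ) c ⊆ Set.Ico 0 τstar := fun y hy =>
      ⟨hy.1, lt_of_le_of_lt hy.2 hc.2⟩
    have hg'cont : Continuous g' :=
      (hgcont.mono hsub).comp_continuous hpcont hpmem
    have hg'eq : ∀ x ∈ Set.Icc (0:ℝ) c, g' x = g x := by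
      intro x hx
      simp only [hg'_def, hp_def, min_eq_left hx.2, max_eq_right hx.1]
    set H : ℝ → ℝ := fun x => ∫ u in (0:ℝ)..x, g' u with hH_def
    have hHderiv : ∀ x, HasDerivAt H (g' x) x := fun x =>
      intervalIntegral.integral_hasDerivAt_right (hg'cont.intervalIntegrable _ _)
        hg'cont.aestronglyMeasurable.stronglyMeasurableAtFilter hg'cont.continuousAt
    have hHcont : Continuous H :=
      continuous_iff_continuousAt.mpr fun x => (hHderiv x).continuousAt
    set φ : ℝ → ℝ := fun t => H (τ t) - (1 - Real.exp (-α * t)) / α with hφ_def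
    have hφcont : ContinuousOn φ (Set.Icc 0 t₀) := by
      apply ContinuousOn.sub (hHcont.comp_continuousOn hcontτ)
      exact (((continuous_const.sub ((continuous_const.mul continuous_id).rexp)).div_const α)).continuousOn
    have hφderiv : ∀ x ∈ Set.Ico (0:ℝ) t₀, HasDerivWithinAt φ 0 (Set.Ici x) x := by
      intro x hx
      have hx' : x ∈ Set.Icc (0:ℝ) t₀ := ⟨hx.1, hx.2.le⟩
      have hτx := hmem x hx'
      have hgne : g (τ x) ≠ 0 := (hgpos _ hτx).ne'
      have h1 : HasDerivAt τ (Real.exp (-α * x) / g (τ x)) x := by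
        rw [← hode x hx.1 (hIS x hx')]
        exact (hdiff x hx.1 (hIS x hx')).hasDerivAt
      have h2 : HasDerivAt (fun t => H (τ t))
          (g' (τ x) * (Real.exp (-α * x) / g (τ x))) x := (hHderiv (τ x)).comp x h1
      have hτxc : τ x ∈ Set.Icc (0:ℝ) c :=
        ⟨hτx.1, hmono hx' ⟨ht₀0, le_refl t₀⟩ hx.2.le⟩
      rw [hg'eq _ hτxc] at h2
      have hval : g (τ x) * (Real.exp (-α * x) / g (τ x)) = Real.exp (-α * x) := by
        field_simp
      rw [hval] at h2
      have h3 : HasDerivAt (fun t : ℝ => (1 - Real.exp (-α * t)) / α)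
          (Real.exp (-α * x)) x := by
        have he : HasDerivAt (fun t : ℝ => Real.exp (-α * t))
            (Real.exp (-α * x) * (-α * 1)) x := ((hasDerivAt_id x).const_mul (-α)).exp
        have h4 := ((hasDerivAt_const x (1:ℝ)).sub he).div_const α
        convert h4 using 1
        show Real.exp (-α * x) = (0 - Real.exp (-α * x) * (-α * 1)) / α
        rw [eq_div_iff hα.ne']; ring
        all_goals rfl
      have h5 := h2.sub h3
      rw [sub_self] at h5
      exact h5.hasDerivWithinAt
    have hconst := constant_of_has_deriv_right_zero hφcont hφderiv t₀ ⟨ht₀0, le_refl t₀⟩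
    have hφ0 : φ 0 = 0 := by
      simp [hφ_def, hτ0, hH_def, Real.exp_zero]
    have hHc : H c = ∫ x in (0:ℝ)..c, g x := by
      apply intervalIntegral.integral_congr
      intro x hx
      rw [Set.uIcc_of_le hc.1] at hx
      exact hg'eq x hx
    have hφt₀ : φ t₀ = 0 := hconst.trans hφ0
    have : H c = (1 - Real.exp (-α * t₀)) / α := by
      have := hφt₀
      simp only [hφ_def] at this
      linarith [this]
    rw [← hHc]
    exact this
  -- continuity of the primitive at τstar
  have hHcontW : ContinuousWithinAt (fun x => ∫ u in (0:ℝ)..x, g u)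
      (Set.Icc 0 τstar) τstar := by
    apply intervalIntegral.continuousWithinAt_primitive (MeasureTheory.measure_singleton _)
    rw [min_self, max_eq_right hτstar.le]
    exact hgIntI
  -- case on S
  induction S using EReal.rec with
  | bot => exact absurd hS (by simp)
  | top =>
    exfalso
    have hcoe : Filter.Tendsto (fun t : ℝ => (t : EReal)) Filter.atTop
        (nhdsWithin (⊤ : EReal) (Set.Iio (⊤:EReal))) := by
      rw [tendsto_nhdsWithin_iff]
      refine ⟨EReal.tendsto_nhds_top_iff_real.mpr fun x => ?_, ?_⟩
      · filter_upwards [Filter.eventually_gt_atTop x] with a ha using EReal.coe_lt_coe_iff.mpr ha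
      · exact Filter.Eventually.of_forall fun x => EReal.coe_lt_top x
    have hle : Filter.atTop ≤ Filter.comap (fun t : ℝ => (t : EReal))
        (nhdsWithin (⊤ : EReal) (Set.Iio (⊤:EReal))) := Filter.tendsto_iff_comap.mp hcoe
    have hτtop : Filter.Tendsto τ Filter.atTop (nhds τstar) := hlim.mono_left hle
    have hτtop' : Filter.Tendsto τ Filter.atTop (nhdsWithin τstar (Set.Icc 0 τstar)) := by
      rw [tendsto_nhdsWithin_iff]
      refine ⟨hτtop, ?_⟩
      filter_upwards [Filter.eventually_ge_atTop (0:ℝ)] with t ht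
      exact Set.Icc_subset_Icc_right le_rfl
        ⟨(hmap t ht (EReal.coe_lt_top t)).1, (hmap t ht (EReal.coe_lt_top t)).2.le⟩
    have hLHS : Filter.Tendsto (fun t => ∫ x in (0:ℝ)..(τ t), g x) Filter.atTop (nhds T) := by
      rw [hTval]
      exact hHcontW.tendsto.comp hτtop'
    have hRHS : Filter.Tendsto (fun t : ℝ => (1 - Real.exp (-α * t)) / α)
        Filter.atTop (nhds ((1 - 0) / α)) := by
      apply Filter.Tendsto.div_const
      apply Filter.Tendsto.const_sub
      apply Real.tendsto_exp_atBot.comp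
      exact Filter.Tendsto.const_mul_atTop_of_neg (neg_neg_iff_pos.mpr hα) Filter.tendsto_id
    have heq : Filter.Tendsto (fun t => ∫ x in (0:ℝ)..(τ t), g x) Filter.atTop
        (nhds ((1 - 0) / α)) := by
      apply hRHS.congr'
      filter_upwards [Filter.eventually_ge_atTop (0:ℝ)] with t ht
      exact (key t ht (EReal.coe_lt_top t)).symm
    have hTeq : T = (1 - 0) / α := tendsto_nhds_unique hLHS heq
    rw [sub_zero] at hTeq
    rw [hTeq, one_div_one_div] at hαT
    exact lt_irrefl α hαT
  | coe s =>
    have hs0 : (0:ℝ) < s := by exact_mod_cast hS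
    have hcoe : Filter.Tendsto (fun t : ℝ => (t : EReal)) (nhdsWithin s (Set.Iio s))
        (nhdsWithin (s : EReal) (Set.Iio (s:EReal))) := by
      rw [tendsto_nhdsWithin_iff]
      constructor
      · exact (continuous_coe_real_ereal.tendsto s).mono_left nhdsWithin_le_nhds
      · filter_upwards [eventually_mem_nhdsWithin] with x hx
        exact EReal.coe_lt_coe_iff.mpr hx
    have hle : nhdsWithin s (Set.Iio s) ≤ Filter.comap (fun t : ℝ => (t : EReal))
        (nhdsWithin (s:EReal) (Set.Iio (s:EReal))) := Filter.tendsto_iff_comap.mp hcoe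
    have hτs : Filter.Tendsto τ (nhdsWithin s (Set.Iio s)) (nhds τstar) := hlim.mono_left hle
    have hev : ∀ᶠ t in nhdsWithin s (Set.Iio s), t ∈ Set.Ioo 0 s :=
      Ioo_mem_nhdsLT_of_mem ⟨hs0, le_refl s⟩
    have hτs' : Filter.Tendsto τ (nhdsWithin s (Set.Iio s))
        (nhdsWithin τstar (Set.Icc 0 τstar)) := by
      rw [tendsto_nhdsWithin_iff]
      refine ⟨hτs, ?_⟩
      filter_upwards [hev] with t ht
      have := hmap t ht.1.le (EReal.coe_lt_coe_iff.mpr ht.2)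
      exact ⟨this.1, this.2.le⟩
    have hLHS : Filter.Tendsto (fun t => ∫ x in (0:ℝ)..(τ t), g x)
        (nhdsWithin s (Set.Iio s)) (nhds T) := by
      rw [hTval]
      exact hHcontW.tendsto.comp hτs'
    have hRHS : Filter.Tendsto (fun t : ℝ => (1 - Real.exp (-α * t)) / α)
        (nhdsWithin s (Set.Iio s)) (nhds ((1 - Real.exp (-α * s)) / α)) := by
      apply Filter.Tendsto.mono_left _ nhdsWithin_le_nhds
      exact (((continuous_const.sub ((continuous_const.mul continuous_id).rexp)).div_const α)).tendsto s
    have heq : Filter.Tendsto (fun t => ∫ x in (0:ℝ)..(τ t), g x)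
        (nhdsWithin s (Set.Iio s)) (nhds ((1 - Real.exp (-α * s)) / α)) := by
      apply hRHS.congr'
      filter_upwards [hev] with t ht
      exact (key t ht.1.le (EReal.coe_lt_coe_iff.mpr ht.2)).symm
    have hTeq : T = (1 - Real.exp (-α * s)) / α := tendsto_nhds_unique hLHS heq
    have hexp : Real.exp (-α * s) = 1 - α * T := by
      field_simp at hTeq
      rw [show -α * s = -(α * s) by ring]
      linarith
    have hlog : Real.log (1 - α * T) = -α * s := by
      rw [← hexp, Real.log_exp]
    have hseq : s = -(1 / α) * Real.log (1 - α * T) := by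
      rw [hlog]
      field_simp
    have hTs : T < s := by
      have hne : (-α * T) ≠ 0 := ne_of_lt (by nlinarith : -α * T < (0:ℝ))
      have h1 : Real.exp (-α * s) < Real.exp (-α * T) := by
        rw [hexp]
        have h3 := Real.add_one_lt_exp hne
        linarith
      have h2 : -α * s < -α * T := Real.exp_lt_exp.mp h1
      exact lt_of_mul_lt_mul_left (by linarith : α * T < α * s) hα.le
    constructor
    · exact_mod_cast congrArg (fun x : ℝ => (x : EReal)) hseq
    · exact_mod_cast hTs
end

section
/- Let α ∈ ℝ, S ∈ (0,∞], I : [0,S) → ℝ a function, and let μ₁ : [0,S) → ℝ be twice differentiable with μ₁(t) > 0 for all t. Define μ₂(t) := μ₁(t) − 1/μ₁(t). If μ₁''(t) + α·μ₁'(t) − I(t)·μ₁(t) = 0 and μ₂''(t) + α·μ₂'(t) − I(t)·μ₂(t) = 1 for all t ∈ [0,S), then N := μ₁'/μ₁ satisfies N'(t) + α·N(t) = μ₁(t)/2 for all t ∈ [0,S). -/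
private lemma aux_diff_of_diff_sub_inv (f : ℝ → ℝ) (s : ℝ)
    (hpos : ∀ᶠ x in nhds s, 0 < f x)
    (hd : DifferentiableAt ℝ (fun x => f x - 1 / f x) s) :
    DifferentiableAt ℝ f s := by
  set g := fun x => f x - 1 / f x with hg
  have hid : f =ᶠ[nhds s] fun x => (g x + Real.sqrt ((g x)^2 + 4)) / 2 := by
    filter_upwards [hpos] with x hx
    have hx' : f x ≠ 0 := ne_of_gt hx
    have h1 : (g x)^2 + 4 = (f x + 1 / f x)^2 := by
      simp only [hg]; field_simp; ring
    rw [h1, Real.sqrt_sq (by positivity)]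
    simp only [hg]; ring
  have hpos2 : (0:ℝ) < (g s)^2 + 4 := by positivity
  have hdsq : DifferentiableAt ℝ (fun x => Real.sqrt ((g x)^2 + 4)) s :=
    ((Real.hasDerivAt_sqrt (ne_of_gt hpos2)).comp s
      (((hd.hasDerivAt.pow 2)).add_const 4)).differentiableAt
  exact ((hd.add hdsq).div_const 2).congr_of_eventuallyEq hid

/-- elimination step in Theorem 2.3, part 2, of
Chen–Sarria. If `μ₁` solves the homogeneous equation
`μ₁'' + α μ₁' − I(t) μ₁ = 0` and `μ₂ = μ₁ − 1/μ₁` solves the inhomogeneous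
equation `μ₂'' + α μ₂' − I(t) μ₂ = 1`, then `N = μ₁'/μ₁` satisfies
`N' + αN = μ₁/2`.  The interval `[0, S)`, `S ∈ (0, ∞]`, is encoded via
`S : EReal`, `0 < S`. -/
theorem eliminate_nonlocal_term_logarithmic_derivative
    (α : ℝ) (S : EReal) (hS : 0 < S) (I μ₁ μ₂ : ℝ → ℝ)
    (hpos : ∀ t : ℝ, 0 ≤ t → (t : EReal) < S → 0 < μ₁ t)
    (hdiff : ∀ t : ℝ, 0 ≤ t → (t : EReal) < S →
      DifferentiableAt ℝ μ₁ t ∧ DifferentiableAt ℝ (deriv μ₁) t)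
    (hμ₂ : ∀ t : ℝ, μ₂ t = μ₁ t - 1 / μ₁ t)
    (hode1 : ∀ t : ℝ, 0 ≤ t → (t : EReal) < S →
      deriv (deriv μ₁) t + α * deriv μ₁ t - I t * μ₁ t = 0)
    (hode2 : ∀ t : ℝ, 0 ≤ t → (t : EReal) < S →
      deriv (deriv μ₂) t + α * deriv μ₂ t - I t * μ₂ t = 1) :
    ∀ t : ℝ, 0 ≤ t → (t : EReal) < S →
      deriv (fun s => deriv μ₁ s / μ₁ s) t + α * (deriv μ₁ t / μ₁ t) = μ₁ t / 2 := by
  have hfun : μ₂ = fun s => μ₁ s - 1 / μ₁ s := funext hμ₂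
  subst hfun
  intro t ht htS
  obtain ⟨h1, h2⟩ := hdiff t ht htS
  have ha : 0 < μ₁ t := hpos t ht htS
  have ha' : μ₁ t ≠ 0 := ne_of_gt ha
  have hev : ∀ᶠ s in nhds t, 0 < μ₁ s :=
    h1.continuousAt.eventually (eventually_gt_nhds ha)
  obtain ⟨ε, hε, hball⟩ := Metric.eventually_nhds_iff_ball.mp hev
  -- the first derivative of `μ₂ = μ₁ - 1/μ₁` agrees with
  -- `μ₁' (1 + 1/μ₁²)` on a neighbourhood of `t` (with junk values matching
  -- at points of non-differentiability)
  have hkey : deriv (fun s => μ₁ s - 1 / μ₁ s)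
      =ᶠ[nhds t] fun s => deriv μ₁ s * (1 + 1/(μ₁ s)^2) := by
    filter_upwards [Metric.ball_mem_nhds t hε] with s hs
    have hposs : ∀ᶠ x in nhds s, 0 < μ₁ x :=
      Filter.eventually_of_mem (Metric.isOpen_ball.mem_nhds hs) hball
    have hs0 : 0 < μ₁ s := hball s hs
    by_cases hd : DifferentiableAt ℝ μ₁ s
    · have hder : HasDerivAt (fun x => μ₁ x - 1/μ₁ x)
          (deriv μ₁ s * (1 + 1/(μ₁ s)^2)) s := by
        have h2' := (hasDerivAt_const s (1:ℝ)).div hd.hasDerivAt (ne_of_gt hs0)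
        have h3' := hd.hasDerivAt.sub h2'
        refine h3'.congr_deriv ?_
        field_simp
        ring
      exact hder.deriv
    · have hnd2 : ¬ DifferentiableAt ℝ (fun x => μ₁ x - 1/μ₁ x) s :=
        fun hcon => hd (aux_diff_of_diff_sub_inv μ₁ s hposs hcon)
      rw [deriv_zero_of_not_differentiableAt hnd2,
        deriv_zero_of_not_differentiableAt hd]
      simp
  have hD2 : HasDerivAt (fun s => deriv μ₁ s * (1 + 1/(μ₁ s)^2))
      (deriv (deriv μ₁) t * (1 + 1/(μ₁ t)^2)
        + deriv μ₁ t * (-(2 * deriv μ₁ t)/(μ₁ t)^3)) t := by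
    have hq : HasDerivAt (fun s => 1/(μ₁ s)^2) (-(2 * deriv μ₁ t)/(μ₁ t)^3) t := by
      have hq0 := (hasDerivAt_const t (1:ℝ)).div (h1.hasDerivAt.pow 2)
        (pow_ne_zero 2 ha')
      refine hq0.congr_deriv ?_
      simp only [Pi.pow_apply]
      field_simp
      ring
    have hm := h2.hasDerivAt.mul ((hasDerivAt_const t (1:ℝ)).add hq)
    refine hm.congr_deriv ?_
    simp only [Pi.add_apply]
    ring
  have hd2eq : deriv (deriv (fun s => μ₁ s - 1/μ₁ s)) t
      = deriv (deriv μ₁) t * (1 + 1/(μ₁ t)^2)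
        + deriv μ₁ t * (-(2 * deriv μ₁ t)/(μ₁ t)^3) := by
    rw [Filter.EventuallyEq.deriv_eq hkey]
    exact hD2.deriv
  have hd1eq : deriv (fun s => μ₁ s - 1/μ₁ s) t
      = deriv μ₁ t * (1 + 1/(μ₁ t)^2) := hkey.self_of_nhds
  have hN : deriv (fun s => deriv μ₁ s / μ₁ s) t
      = (deriv (deriv μ₁) t * μ₁ t - deriv μ₁ t * deriv μ₁ t)/(μ₁ t)^2 := by
    exact (h2.hasDerivAt.div h1.hasDerivAt ha').deriv
  have e1 := hode1 t ht htS
  have e2 := hode2 t ht htS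
  rw [hN]
  set a := μ₁ t with hadef
  set b := deriv μ₁ t with hbdef
  set c := deriv (deriv μ₁) t with hcdef
  have e2' : c * (1 + 1/a^2) + b * (-(2*b)/a^3)
      + α * (b * (1 + 1/a^2)) - I t * (a - 1/a) = 1 := by
    rw [← hd2eq, ← hd1eq]; exact e2
  have hI : I t = (c + α * b)/a := by
    rw [eq_div_iff ha']; linarith
  rw [hI] at e2'
  field_simp at e2'
  have h6 : (a:ℝ)^6 ≠ 0 := pow_ne_zero _ ha'
  have key : 2*c*a + 2*α*b*a - 2*b^2 = a^3 := by
    have h : a^6 * (2*c*a + 2*α*b*a - 2*b^2) = a^6 * a^3 := by linear_combination a^6 * e2'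
    exact mul_left_cancel₀ h6 h
  field_simp
  linear_combination key
end

section
/- Let α ≥ 0, S ∈ (0,∞], and let N : [0,S) → ℝ be twice differentiable with N(0) = 1, N'(0) = 1/2 − α, and (d/dt)(N'(t) − N(t)²/2 + α·N(t)) = α·N(t)² for all t ∈ [0,S). Then the function z(t) := e^{αt}·N(t) satisfies z(0) = 1 and z'(t) ≥ (1/2)·e^{−αt}·z(t)² for all t ∈ [0,S). -/
/-- Gronwall-type step (4.20) in Theorem 2.3, part 2, of
Chen–Sarria. If `N(0) = 1`, `N'(0) = 1/2 − α` and
`(N' − N²/2 + αN)' = αN²` on `[0, S)`, then `z(t) = e^{αt} N(t)` satisfies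
`z(0) = 1` and the Riccati differential inequality
`z'(t) ≥ (1/2) e^{−αt} z(t)²`.  The interval `[0, S)`, `S ∈ (0, ∞]`, is
encoded via `S : EReal`, `0 < S`. -/
theorem riccati_inequality_from_integrated_identity
    (α : ℝ) (hα : 0 ≤ α) (S : EReal) (hS : 0 < S) (N : ℝ → ℝ)
    (hdiff : ∀ t : ℝ, 0 ≤ t → (t : EReal) < S →
      DifferentiableAt ℝ N t ∧ DifferentiableAt ℝ (deriv N) t)
    (hN0 : N 0 = 1) (hN'0 : deriv N 0 = 1 / 2 - α)
    (hode : ∀ t : ℝ, 0 ≤ t → (t : EReal) < S →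
      deriv (fun s => deriv N s - N s ^ 2 / 2 + α * N s) t = α * N t ^ 2) :
    Real.exp (α * 0) * N 0 = 1 ∧
      ∀ t : ℝ, 0 ≤ t → (t : EReal) < S →
        (1 / 2) * Real.exp (-α * t) * (Real.exp (α * t) * N t) ^ 2 ≤
          deriv (fun s => Real.exp (α * s) * N s) t := by
  constructor
  · simp [hN0]
  intro t ht htS
  set F : ℝ → ℝ := fun s => deriv N s - N s ^ 2 / 2 + α * N s with hF
  have hFdiff : ∀ s : ℝ, 0 ≤ s → (s : EReal) < S → DifferentiableAt ℝ F s := by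
    intro s hs hsS
    obtain ⟨h1, h2⟩ := hdiff s hs hsS
    exact ((h2.sub ((h1.pow 2).div_const 2)).add (h1.const_mul α))
  have hmemS : ∀ s : ℝ, s ∈ Set.Icc 0 t → (s : EReal) < S := by
    intro s hs
    exact lt_of_le_of_lt (EReal.coe_le_coe_iff.mpr hs.2) htS
  have hmono : MonotoneOn F (Set.Icc 0 t) := by
    apply monotoneOn_of_deriv_nonneg (convex_Icc 0 t)
    · intro s hs
      exact (hFdiff s hs.1 (hmemS s hs)).continuousAt.continuousWithinAt
    · intro s hs
      have hs' : s ∈ Set.Icc 0 t := interior_subset hs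
      exact (hFdiff s hs'.1 (hmemS s hs')).differentiableWithinAt
    · intro s hs
      have hs' : s ∈ Set.Icc 0 t := interior_subset hs
      rw [hode s hs'.1 (hmemS s hs')]
      exact mul_nonneg hα (sq_nonneg _)
  have hF0 : F 0 = 0 := by simp only [hF, hN'0, hN0]; ring
  have hFt : 0 ≤ F t := by
    have := hmono (Set.left_mem_Icc.mpr ht) (Set.right_mem_Icc.mpr ht) ht
    rw [hF0] at this; exact this
  have key : N t ^ 2 / 2 ≤ deriv N t + α * N t := by
    simp only [hF] at hFt; linarith
  have hz : HasDerivAt (fun s => Real.exp (α * s) * N s)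
      (Real.exp (α * t) * (α * 1) * N t + Real.exp (α * t) * deriv N t) t :=
    (((hasDerivAt_id t).const_mul α).exp).mul (hdiff t ht htS).1.hasDerivAt
  rw [hz.deriv]
  have hE : Real.exp (-α * t) * Real.exp (α * t) = 1 := by
    rw [← Real.exp_add]; ring_nf; exact Real.exp_zero
  have hEpos := Real.exp_pos (α * t)
  have key' := mul_le_mul_of_nonneg_left key hEpos.le
  nlinarith [Real.exp_pos (-α * t)]
end

section
/- Let 0 < α < 1/2 and set T_α := −(1/α)·ln(1 − 2α). Let S ∈ (0,∞] and let z : [0,S) → ℝ be differentiable with z(0) = 1 and z'(t) ≥ (1/2)·e^{−αt}·z(t)² for all t ∈ [0,S). Then for every t ∈ [0,S) with t < T_α: z(t) ≥ 2α/(e^{−αt} − (1 − 2α)). -/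
/-- comparison step in Theorem 2.3, part 2, of
Chen–Sarria. A solution of the Riccati differential inequality
`z' ≥ (1/2) e^{−αt} z²`, `z(0) = 1`, with `0 < α < 1/2`, satisfies
`z(t) ≥ 2α/(e^{−αt} − (1 − 2α))` for `t < T_α = −(1/α) ln(1 − 2α)`.
The interval `[0, S)`, `S ∈ (0, ∞]`, is encoded via `S : EReal`, `0 < S`. -/
theorem riccati_comparison_lower_bound
    (α : ℝ) (hα : 0 < α) (hα' : α < 1 / 2)
    (S : EReal) (hS : 0 < S) (z : ℝ → ℝ)
    (hz0 : z 0 = 1)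
    (hdiff : ∀ t : ℝ, 0 ≤ t → (t : EReal) < S → DifferentiableAt ℝ z t)
    (hineq : ∀ t : ℝ, 0 ≤ t → (t : EReal) < S →
      (1 / 2) * Real.exp (-α * t) * z t ^ 2 ≤ deriv z t) :
    ∀ t : ℝ, 0 ≤ t → (t : EReal) < S → t < -(1 / α) * Real.log (1 - 2 * α) →
      2 * α / (Real.exp (-α * t) - (1 - 2 * α)) ≤ z t := by
  intro t ht0 htS htT
  -- every s ∈ [0, t] has (s : EReal) < S
  have hlt : ∀ s ∈ Set.Icc (0:ℝ) t, (s : EReal) < S := by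
    intro s hs
    exact lt_of_le_of_lt (EReal.coe_le_coe_iff.2 hs.2) htS
  have hdiff' : ∀ s ∈ Set.Icc (0:ℝ) t, DifferentiableAt ℝ z s := fun s hs =>
    hdiff s hs.1 (hlt s hs)
  have hineq' : ∀ s ∈ Set.Icc (0:ℝ) t,
      (1 / 2) * Real.exp (-α * s) * z s ^ 2 ≤ deriv z s := fun s hs =>
    hineq s hs.1 (hlt s hs)
  -- z is monotone on [0, t]
  have hconv : Convex ℝ (Set.Icc (0:ℝ) t) := convex_Icc 0 t
  have hint : interior (Set.Icc (0:ℝ) t) ⊆ Set.Icc (0:ℝ) t := interior_subset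
  have hmono : MonotoneOn z (Set.Icc (0:ℝ) t) := by
    apply monotoneOn_of_deriv_nonneg hconv
    · exact fun s hs => (hdiff' s hs).continuousAt.continuousWithinAt
    · exact fun s hs => ((hdiff' s (hint hs)).differentiableWithinAt)
    · intro s hs
      have := hineq' s (hint hs)
      have he : 0 < Real.exp (-α * s) := Real.exp_pos _
      nlinarith [sq_nonneg (z s)]
  have hz1 : ∀ s ∈ Set.Icc (0:ℝ) t, 1 ≤ z s := by
    intro s hs
    have := hmono (Set.left_mem_Icc.2 ht0) hs hs.1
    rw [hz0] at this; exact this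
  have hzpos : ∀ s ∈ Set.Icc (0:ℝ) t, 0 < z s := fun s hs =>
    lt_of_lt_of_le one_pos (hz1 s hs)
  -- auxiliary function φ
  set φ : ℝ → ℝ := fun s => (z s)⁻¹ - (1 / (2 * α)) * Real.exp (-α * s) with hφ
  have hφderiv : ∀ s ∈ Set.Icc (0:ℝ) t,
      HasDerivAt φ (-(deriv z s) / (z s) ^ 2 - (1 / (2 * α)) * (-α * Real.exp (-α * s))) s := by
    intro s hs
    have hz : HasDerivAt z (deriv z s) s := (hdiff' s hs).hasDerivAt
    have hinv : HasDerivAt (fun y => (z y)⁻¹) (-(deriv z s) / (z s) ^ 2) s :=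
      hz.inv (hzpos s hs).ne'
    have hexp : HasDerivAt (fun y : ℝ => Real.exp (-α * y)) (-α * Real.exp (-α * s)) s := by
      simpa [mul_comm] using (((hasDerivAt_id s).const_mul (-α)).exp)
    exact hinv.sub (hexp.const_mul (1 / (2 * α)))
  have hanti : AntitoneOn φ (Set.Icc (0:ℝ) t) := by
    apply antitoneOn_of_deriv_nonpos hconv
    · exact fun s hs => ((hφderiv s hs).differentiableAt).continuousAt.continuousWithinAt
    · exact fun s hs => ((hφderiv s (hint hs)).differentiableAt).differentiableWithinAt
    · intro s hs
      have hd := (hφderiv s (hint hs)).deriv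
      rw [hd]
      have hzs := hzpos s (hint hs)
      have hzsq : (0:ℝ) < z s ^ 2 := by positivity
      have hin := hineq' s (hint hs)
      have he : 0 < Real.exp (-α * s) := Real.exp_pos _
      have key : -(deriv z s) / (z s) ^ 2 ≤ -((1 / 2) * Real.exp (-α * s)) := by
        rw [div_le_iff₀ hzsq]
        nlinarith
      have : (1 / (2 * α)) * (-α * Real.exp (-α * s)) = -((1 / 2) * Real.exp (-α * s)) := by
        field_simp
      rw [this]
      linarith
  -- compare φ t with φ 0
  have hmem0 : (0:ℝ) ∈ Set.Icc (0:ℝ) t := Set.left_mem_Icc.2 ht0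
  have hmemt : t ∈ Set.Icc (0:ℝ) t := Set.right_mem_Icc.2 ht0
  have hφle := hanti hmem0 hmemt ht0
  have hφ0 : φ 0 = 1 - 1 / (2 * α) := by
    simp [hφ, hz0]
  rw [hφ0] at hφle
  -- denominator positivity
  have h2α : (0:ℝ) < 2 * α := by linarith
  have h1 : (0:ℝ) < 1 - 2 * α := by linarith
  have hD : 0 < Real.exp (-α * t) - (1 - 2 * α) := by
    have h' : α * t < -Real.log (1 - 2 * α) := by
      have h2 := mul_lt_mul_of_pos_left htT hα
      have : α * (-(1 / α) * Real.log (1 - 2 * α)) = -Real.log (1 - 2 * α) := by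
        field_simp
      linarith [h2, this.le, this.ge]
    have hlog : Real.log (1 - 2 * α) < -α * t := by linarith
    have := Real.exp_lt_exp.2 hlog
    rw [Real.exp_log h1] at this
    linarith
  -- conclude
  have hzt := hzpos t hmemt
  have hφle2 : 2 * α * (z t)⁻¹ ≤ Real.exp (-α * t) - (1 - 2 * α) := by
    have h2 := mul_le_mul_of_nonneg_left hφle h2α.le
    have e3 : 2 * α * ((z t)⁻¹ - 1 / (2 * α) * Real.exp (-α * t))
        = 2 * α * (z t)⁻¹ - Real.exp (-α * t) := by
      field_simp
    have e4 : 2 * α * (1 - 1 / (2 * α)) = 2 * α - 1 := by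
      field_simp
    have hφt : φ t = (z t)⁻¹ - 1 / (2 * α) * Real.exp (-α * t) := rfl
    rw [hφt] at h2
    linarith [h2, e3.le, e3.ge, e4.le, e4.ge]
  rw [div_le_iff₀ hD]
  have e5 : z t * (2 * α * (z t)⁻¹) = 2 * α := by field_simp
  linarith [mul_le_mul_of_nonneg_left hφle2 hzt.le, e5.le, e5.ge]
end

section
/- Let 0 < α < 1/2 and set T_α := −(1/α)·ln(1 − 2α). Let μ₁ : [0,T_α) → ℝ be differentiable with μ₁(t) > 0 for all t, μ₁(0) = 1, and μ₁'(t) ≥ (2α·e^{−αt}/(e^{−αt} − (1 − 2α)))·μ₁(t) for all t ∈ [0,T_α). Then μ₁(t) ≥ 4α²/(e^{−αt} − (1 − 2α))² for all t ∈ [0,T_α), and consequently μ₁(t) → +∞ as t → T_α⁻. -/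
/-- estimate (4.22) in Theorem 2.3, part 2, of
Chen–Sarria. If `μ₁ > 0` on `[0, T_α)`, `μ₁(0) = 1`, and
`μ₁'(t) ≥ (2α e^{−αt}/(e^{−αt} − (1 − 2α))) μ₁(t)`, where
`T_α = −(1/α) ln(1 − 2α)` and `0 < α < 1/2`, then
`μ₁(t) ≥ 4α²/(e^{−αt} − (1 − 2α))²`; consequently `μ₁(t) → +∞` as
`t → T_α⁻`. -/
theorem mu_one_lower_bound_and_blowup
    (α : ℝ) (hα : 0 < α) (hα' : α < 1 / 2)
    (μ₁ : ℝ → ℝ)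
    (hpos : ∀ t ∈ Set.Ico (0:ℝ) (-(1 / α) * Real.log (1 - 2 * α)), 0 < μ₁ t)
    (hμ0 : μ₁ 0 = 1)
    (hdiff : ∀ t ∈ Set.Ico (0:ℝ) (-(1 / α) * Real.log (1 - 2 * α)),
      DifferentiableAt ℝ μ₁ t)
    (hineq : ∀ t ∈ Set.Ico (0:ℝ) (-(1 / α) * Real.log (1 - 2 * α)),
      (2 * α * Real.exp (-α * t) / (Real.exp (-α * t) - (1 - 2 * α))) * μ₁ t ≤
        deriv μ₁ t) :
    (∀ t ∈ Set.Ico (0:ℝ) (-(1 / α) * Real.log (1 - 2 * α)),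
      4 * α ^ 2 / (Real.exp (-α * t) - (1 - 2 * α)) ^ 2 ≤ μ₁ t) ∧
    Filter.Tendsto μ₁
      (nhdsWithin (-(1 / α) * Real.log (1 - 2 * α))
        (Set.Iio (-(1 / α) * Real.log (1 - 2 * α))))
      Filter.atTop := by
  set c : ℝ := 1 - 2 * α with hc
  set T : ℝ := -(1 / α) * Real.log c with hT
  have hc0 : 0 < c := by simp only [hc]; linarith
  have hc1 : c < 1 := by simp only [hc]; linarith
  have hlogc : Real.log c < 0 := Real.log_neg hc0 hc1
  have hT0 : 0 < T := by
    rw [hT]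
    have : 0 < 1 / α := by positivity
    nlinarith
  -- the denominator is positive on `Iio T`
  have hden : ∀ t : ℝ, t < T → c < Real.exp (-α * t) := by
    intro t ht
    have h1 : α * t < α * T := by nlinarith
    have h2 : α * T = -Real.log c := by
      rw [hT]; field_simp
    have h3 : Real.log c < -α * t := by nlinarith [h1, h2]
    calc c = Real.exp (Real.log c) := (Real.exp_log hc0).symm
      _ < Real.exp (-α * t) := Real.exp_lt_exp.mpr h3
  set f : ℝ → ℝ := fun t => Real.log (μ₁ t) + 2 * Real.log (Real.exp (-α * t) - c)
    with hf
  -- derivative of f on Ico 0 T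
  have hfderiv : ∀ t ∈ Set.Ico (0:ℝ) T,
      HasDerivAt f (deriv μ₁ t / μ₁ t + 2 * ((Real.exp (-α * t) * -α) / (Real.exp (-α * t) - c))) t := by
    intro t ht
    have hμpos := hpos t ht
    have h1 : HasDerivAt (fun s : ℝ => Real.log (μ₁ s)) (deriv μ₁ t / μ₁ t) t :=
      ((hdiff t ht).hasDerivAt).log hμpos.ne'
    have h2 : HasDerivAt (fun s : ℝ => -α * s) (-α) t := by
      simpa using (hasDerivAt_id t).const_mul (-α)
    have h3 : HasDerivAt (fun s : ℝ => Real.exp (-α * s) - c)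
        (Real.exp (-α * t) * -α) t := (h2.exp).sub_const c
    have hd : 0 < Real.exp (-α * t) - c := sub_pos.mpr (hden t ht.2)
    have h4 := (h3.log hd.ne').const_mul (2:ℝ)
    exact h1.add h4
  have hmono : MonotoneOn f (Set.Ico 0 T) := by
    apply monotoneOn_of_deriv_nonneg (convex_Ico 0 T)
    · intro t ht
      exact ((hfderiv t ht).differentiableAt).continuousAt.continuousWithinAt
    · intro t ht
      rw [interior_Ico] at ht
      exact ((hfderiv t ⟨le_of_lt ht.1, ht.2⟩).differentiableAt).differentiableWithinAt
    · intro t ht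
      rw [interior_Ico] at ht
      have ht' : t ∈ Set.Ico (0:ℝ) T := ⟨le_of_lt ht.1, ht.2⟩
      rw [(hfderiv t ht').deriv]
      have hμpos := hpos t ht'
      have hd : 0 < Real.exp (-α * t) - c := sub_pos.mpr (hden t ht.2)
      have hi := hineq t ht'
      have : 2 * α * Real.exp (-α * t) / (Real.exp (-α * t) - c)
          ≤ deriv μ₁ t / μ₁ t := by
        rw [le_div_iff₀ hμpos]
        exact hi
      have heq : 2 * ((Real.exp (-α * t) * -α) / (Real.exp (-α * t) - c))
          = -(2 * α * Real.exp (-α * t) / (Real.exp (-α * t) - c)) := by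
        ring
      rw [heq]
      linarith
  -- the pointwise lower bound
  have hbound : ∀ t ∈ Set.Ico (0:ℝ) T,
      4 * α ^ 2 / (Real.exp (-α * t) - c) ^ 2 ≤ μ₁ t := by
    intro t ht
    have h0 : (0:ℝ) ∈ Set.Ico (0:ℝ) T := ⟨le_refl 0, hT0⟩
    have hle : f 0 ≤ f t := hmono h0 ht ht.1
    have hd : 0 < Real.exp (-α * t) - c := sub_pos.mpr (hden t ht.2)
    have hμpos := hpos t ht
    have hf0 : f 0 = 2 * Real.log (2 * α) := by
      simp [hf, hμ0, hc]
    have hfeq : f t = Real.log (μ₁ t) + 2 * Real.log (Real.exp (-α * t) - c) := rfl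
    -- deduce log inequality
    have key : Real.log (4 * α ^ 2 / (Real.exp (-α * t) - c) ^ 2) ≤ Real.log (μ₁ t) := by
      have h4a : (4 : ℝ) * α ^ 2 = (2 * α) ^ 2 := by ring
      rw [h4a, Real.log_div (by positivity) (by positivity), Real.log_pow, Real.log_pow]
      push_cast
      rw [hf0, hfeq] at hle
      linarith
    calc 4 * α ^ 2 / (Real.exp (-α * t) - c) ^ 2
        = Real.exp (Real.log (4 * α ^ 2 / (Real.exp (-α * t) - c) ^ 2)) := by
          rw [Real.exp_log (by positivity)]
      _ ≤ Real.exp (Real.log (μ₁ t)) := Real.exp_le_exp.mpr key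
      _ = μ₁ t := Real.exp_log hμpos
  refine ⟨hbound, ?_⟩
  -- blowup
  have hexpT : Real.exp (-α * T) = c := by
    rw [hT]
    have : -α * (-(1 / α) * Real.log c) = Real.log c := by
      field_simp
    rw [this, Real.exp_log hc0]
  have hden_tendsto : Filter.Tendsto (fun t => (Real.exp (-α * t) - c) ^ 2)
      (nhdsWithin T (Set.Iio T)) (nhdsWithin 0 (Set.Ioi 0)) := by
    apply tendsto_nhdsWithin_of_tendsto_nhds_of_eventually_within _
    · have : Filter.Tendsto (fun t => (Real.exp (-α * t) - c) ^ 2) (nhds T)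
          (nhds ((Real.exp (-α * T) - c) ^ 2)) := by
        apply Filter.Tendsto.pow
        exact ((Real.continuous_exp.comp (continuous_const.mul continuous_id)).sub
          continuous_const).tendsto T
      have h0 : (Real.exp (-α * T) - c) ^ 2 = 0 := by rw [hexpT]; ring
      rw [h0] at this
      exact this.mono_left nhdsWithin_le_nhds
    · filter_upwards [self_mem_nhdsWithin] with t ht
      have hd : 0 < Real.exp (-α * t) - c := sub_pos.mpr (hden t ht)
      exact Set.mem_Ioi.mpr (by positivity)
  have hg_tendsto : Filter.Tendsto (fun t => 4 * α ^ 2 / (Real.exp (-α * t) - c) ^ 2)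
      (nhdsWithin T (Set.Iio T)) Filter.atTop := by
    have hinv : Filter.Tendsto (fun t => ((Real.exp (-α * t) - c) ^ 2)⁻¹)
        (nhdsWithin T (Set.Iio T)) Filter.atTop :=
      Filter.Tendsto.inv_tendsto_nhdsGT_zero hden_tendsto
    have := hinv.const_mul_atTop (show (0:ℝ) < 4 * α ^ 2 by positivity)
    simpa [div_eq_mul_inv] using this
  apply Filter.tendsto_atTop_mono' _ _ hg_tendsto
  have hIoo : Set.Ioo 0 T ∈ nhdsWithin T (Set.Iio T) :=
    Ioo_mem_nhdsLT_of_mem ⟨hT0, le_refl T⟩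
  filter_upwards [hIoo] with t ht
  exact hbound t ⟨le_of_lt ht.1, ht.2⟩
end
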